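/- arXiv:1507.04167 — 4 statements merged into one kernel-verified Lean document; each statement's English description precedes it below -/
import Mathlib

section
/- Suppose ≽ satisfies A1 (weak order), weak separability (A2), A3, and closedness. Then for every x ∈ SE there exists z ∈ Θ such that SE(x) ⊆ SE(z), and for every y ∈ NW there exists z ∈ Θ such that NW(y) ⊆ NW(z). Consequently SE = ⋃_{z ∈ Θ} SE(z) and NW = ⋃_{z ∈ Θ} NW(z). -/
open Set
open scoped Classical

section ChoquetAxioms

variable {X₁ X₂ : Type*}

/-- Asymmetric (strict) part of a relation. -/
def SP (R : X₁ × X₂ → X₁ × X₂ → Prop) (x y : X₁ × X₂) : Prop := R x y ∧ ¬ R y x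

/-- Symmetric (indifference) part of a relation. -/
def IP (R : X₁ × X₂ → X₁ × X₂ → Prop) (x y : X₁ × X₂) : Prop := R x y ∧ R y x

/-- Triple cancellation on a set `A`. -/
def TCancel (R : X₁ × X₂ → X₁ × X₂ → Prop) (A : Set (X₁ × X₂)) : Prop :=
  ∀ a b c d : X₁, ∀ p q r s : X₂,
    (a,p) ∈ A → (b,q) ∈ A → (a,r) ∈ A → (b,s) ∈ A →
    (c,p) ∈ A → (d,q) ∈ A → (c,r) ∈ A → (d,s) ∈ A →
    R (b,q) (a,p) → R (a,r) (b,s) → R (c,p) (d,q) → R (c,r) (d,s)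

/-- A1: weak order (complete and transitive). -/
def A1 (R : X₁ × X₂ → X₁ × X₂ → Prop) : Prop :=
  (∀ x y, R x y ∨ R y x) ∧ (∀ x y z, R x y → R y z → R x z)

/-- A2: weak separability. -/
def A2 (R : X₁ × X₂ → X₁ × X₂ → Prop) : Prop :=
  (∀ a b : X₁, ∀ p : X₂, SP R (a,p) (b,p) → ∀ q : X₂, R (a,q) (b,q)) ∧
  (∀ p q : X₂, ∀ a : X₁, SP R (a,p) (a,q) → ∀ b : X₁, R (b,p) (b,q))

/-- Induced order on the first coordinate. -/
def Ge1 (R : X₁ × X₂ → X₁ × X₂ → Prop) (a b : X₁) : Prop := ∀ p : X₂, R (a,p) (b,p)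

/-- Induced order on the second coordinate. -/
def Ge2 (R : X₁ × X₂ → X₁ × X₂ → Prop) (p q : X₂) : Prop := ∀ a : X₁, R (a,p) (a,q)

def Max1 (R : X₁ × X₂ → X₁ × X₂ → Prop) (a : X₁) : Prop := ∀ b : X₁, Ge1 R a b
def Min1 (R : X₁ × X₂ → X₁ × X₂ → Prop) (a : X₁) : Prop := ∀ b : X₁, Ge1 R b a
def Max2 (R : X₁ × X₂ → X₁ × X₂ → Prop) (p : X₂) : Prop := ∀ q : X₂, Ge2 R p q
def Min2 (R : X₁ × X₂ → X₁ × X₂ → Prop) (p : X₂) : Prop := ∀ q : X₂, Ge2 R q p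

/-- The south-east rectangular cone at `z`. -/
def SEz (R : X₁ × X₂ → X₁ × X₂ → Prop) (z : X₁ × X₂) : Set (X₁ × X₂) :=
  {x | Ge1 R x.1 z.1 ∧ Ge2 R z.2 x.2}

/-- The north-west rectangular cone at `z`. -/
def NWz (R : X₁ × X₂ → X₁ × X₂ → Prop) (z : X₁ × X₂) : Set (X₁ × X₂) :=
  {x | Ge2 R x.2 z.2 ∧ Ge1 R z.1 x.1}

/-- A3: at every point, triple cancellation holds on `SEz z` or on `NWz z`. -/
def A3 (R : X₁ × X₂ → X₁ × X₂ → Prop) : Prop :=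
  ∀ z : X₁ × X₂, TCancel R (SEz R z) ∨ TCancel R (NWz R z)

/-- The region SE. -/
def SEreg (R : X₁ × X₂ → X₁ × X₂ → Prop) : Set (X₁ × X₂) :=
  {x | (∃ z : X₁ × X₂, ¬ Max1 R z.1 ∧ ¬ Min2 R z.2 ∧ TCancel R (SEz R z) ∧ x ∈ SEz R z) ∨
       ((Max1 R x.1 ∨ Min2 R x.2) ∧ ∀ y ∈ SEz R x, y ≠ x → ¬ TCancel R (NWz R y))}

/-- The region NW. -/
def NWreg (R : X₁ × X₂ → X₁ × X₂ → Prop) : Set (X₁ × X₂) :=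
  {x | (∃ z : X₁ × X₂, ¬ Min1 R z.1 ∧ ¬ Max2 R z.2 ∧ TCancel R (NWz R z) ∧ x ∈ NWz R z) ∨
       ((Min1 R x.1 ∨ Max2 R x.2) ∧ ∀ y ∈ NWz R x, y ≠ x → ¬ TCancel R (SEz R y))}

/-- Θ = SE ∩ NW. -/
def Theta (R : X₁ × X₂ → X₁ × X₂ → Prop) : Set (X₁ × X₂) := SEreg R ∩ NWreg R

/-- Extreme points of SE. -/
def SEext (R : X₁ × X₂ → X₁ × X₂ → Prop) : Set (X₁ × X₂) :=
  {x | x ∈ Theta R ∧ (Min2 R x.2 ∨ Max1 R x.1)}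

/-- Extreme points of NW. -/
def NWext (R : X₁ × X₂ → X₁ × X₂ → Prop) : Set (X₁ × X₂) :=
  {x | x ∈ Theta R ∧ (Min1 R x.1 ∨ Max2 R x.2)}

/-- Coordinate 1 is essential on `A`. -/
def Ess1 (R : X₁ × X₂ → X₁ × X₂ → Prop) (A : Set (X₁ × X₂)) : Prop :=
  ∃ a b : X₁, ∃ p : X₂, (a,p) ∈ A ∧ (b,p) ∈ A ∧ SP R (a,p) (b,p)

/-- Coordinate 2 is essential on `A`. -/
def Ess2 (R : X₁ × X₂ → X₁ × X₂ → Prop) (A : Set (X₁ × X₂)) : Prop :=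
  ∃ p q : X₂, ∃ a : X₁, (a,p) ∈ A ∧ (a,q) ∈ A ∧ SP R (a,p) (a,q)

/-- Four points all belonging to a set. -/
def In4 (A : Set (X₁ × X₂)) (w x y z : X₁ × X₂) : Prop :=
  w ∈ A ∧ x ∈ A ∧ y ∈ A ∧ z ∈ A

/-- A4. -/
def A4 (R : X₁ × X₂ → X₁ × X₂ → Prop) : Prop :=
  ∀ a b c d : X₁, ∀ p q r s : X₂,
    ((In4 (NWreg R) (a,p) (b,q) (a,r) (b,s) ∧ In4 (NWreg R) (c,p) (d,q) (c,r) (d,s)) ∨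
     (In4 (SEreg R) (a,p) (b,q) (a,r) (b,s) ∧ In4 (SEreg R) (c,p) (d,q) (c,r) (d,s)) ∨
     (In4 (NWreg R) (a,p) (b,q) (a,r) (b,s) ∧ Ess2 R (NWreg R) ∧
        In4 (SEreg R) (c,p) (d,q) (c,r) (d,s)) ∨
     (In4 (SEreg R) (a,p) (b,q) (a,r) (b,s) ∧ Ess2 R (SEreg R) ∧
        In4 (NWreg R) (c,p) (d,q) (c,r) (d,s)) ∨
     (In4 (NWreg R) (a,p) (b,q) (c,p) (d,q) ∧ Ess1 R (NWreg R) ∧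
        In4 (SEreg R) (a,r) (b,s) (c,r) (d,s)) ∨
     (In4 (SEreg R) (a,p) (b,q) (c,p) (d,q) ∧ Ess1 R (SEreg R) ∧
        In4 (NWreg R) (a,r) (b,s) (c,r) (d,s))) →
    R (b,q) (a,p) → R (a,r) (b,s) → R (c,p) (d,q) → R (c,r) (d,s)

/-- One half of A5 (stated for the given coordinate order). -/
def A5half (R : X₁ × X₂ → X₁ × X₂ → Prop) : Prop :=
  ∀ a b c d e g x₀ x₁ : X₁, ∀ p q y₀ y₁ πa πb πc πd : X₂,
    ((In4 (NWreg R) (a,p) (b,q) (c,p) (d,q) ∧ Ess1 R (NWreg R)) ∨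
     (In4 (SEreg R) (a,p) (b,q) (c,p) (d,q) ∧ Ess1 R (SEreg R))) →
    (In4 (NWreg R) (a,y₀) (b,y₀) (c,y₁) (d,y₁) ∨
     In4 (SEreg R) (a,y₀) (b,y₀) (c,y₁) (d,y₁)) →
    ((In4 (NWreg R) (x₀,πa) (x₀,πb) (x₁,πc) (x₁,πd) ∧ Ess2 R (NWreg R)) ∨
     (In4 (SEreg R) (x₀,πa) (x₀,πb) (x₁,πc) (x₁,πd) ∧ Ess2 R (SEreg R))) →
    (In4 (NWreg R) (e,πa) (g,πb) (e,πc) (g,πd) ∨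
     In4 (SEreg R) (e,πa) (g,πb) (e,πc) (g,πd)) →
    R (b,q) (a,p) → R (c,p) (d,q) →
    IP R (a,y₀) (x₀,πa) → IP R (b,y₀) (x₀,πb) →
    IP R (c,y₁) (x₁,πc) → IP R (d,y₁) (x₁,πd) →
    R (e,πa) (g,πb) → R (e,πc) (g,πd)

/-- The relation with the roles of the two coordinates exchanged. -/
def swapRel (R : X₁ × X₂ → X₁ × X₂ → Prop) : X₂ × X₁ → X₂ × X₁ → Prop :=
  fun x y => R (x.2, x.1) (y.2, y.1)

/-- A5 : the condition together with its symmetric (coordinate-exchanged) version. -/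
def A5 (R : X₁ × X₂ → X₁ × X₂ → Prop) : Prop :=
  A5half R ∧ A5half (swapRel R)

/-- A6 : bi-independence. -/
def A6 (R : X₁ × X₂ → X₁ × X₂ → Prop) : Prop :=
  (∀ a b c d : X₁, ∀ p : X₂,
    (In4 (SEreg R) (a,p) (b,p) (c,p) (d,p) ∨ In4 (NWreg R) (a,p) (b,p) (c,p) (d,p)) →
    SP R (a,p) (b,p) → (∃ q : X₂, SP R (c,q) (d,q)) → SP R (c,p) (d,p)) ∧
  (∀ p q r s : X₂, ∀ a : X₁,
    (In4 (SEreg R) (a,p) (a,q) (a,r) (a,s) ∨ In4 (NWreg R) (a,p) (a,q) (a,r) (a,s)) →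
    SP R (a,p) (a,q) → (∃ b : X₁, SP R (b,r) (b,s)) → SP R (a,r) (a,s))

/-- A7 : both coordinates are essential on X. -/
def A7 (R : X₁ × X₂ → X₁ × X₂ → Prop) : Prop :=
  Ess1 R Set.univ ∧ Ess2 R Set.univ

/-- A8 : restricted solvability. -/
def A8 (R : X₁ × X₂ → X₁ × X₂ → Prop) : Prop :=
  (∀ a : X₁, ∀ p r : X₂, ∀ y : X₁ × X₂,
    R (a,p) y → R y (a,r) → ∃ b : X₂, IP R (a,b) y) ∧
  (∀ p : X₂, ∀ a c : X₁, ∀ y : X₁ × X₂,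
    R (a,p) y → R y (c,p) → ∃ b : X₁, IP R (b,p) y)

/-- `S` is an interval of integers. -/
def IsIntervalZ (S : Set ℤ) : Prop :=
  ∀ i j k : ℤ, i ≤ j → j ≤ k → i ∈ S → k ∈ S → j ∈ S

/-- Standard sequence on X₁. -/
def StdSeq1 (R : X₁ × X₂ → X₁ × X₂ → Prop) (S : Set ℤ) (g : ℤ → X₁) (y₀ y₁ : X₂) : Prop :=
  IsIntervalZ S ∧ ¬ (Ge2 R y₀ y₁ ∧ Ge2 R y₁ y₀) ∧
  ∀ i, i ∈ S → (i+1) ∈ S → IP R (g i, y₀) (g (i+1), y₁)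

def BoundedSeq1 (R : X₁ × X₂ → X₁ × X₂ → Prop) (S : Set ℤ) (g : ℤ → X₁) (y₀ : X₂) : Prop :=
  ∃ u v : X₁ × X₂, ∀ i ∈ S, R u (g i, y₀) ∧ R (g i, y₀) v

/-- Standard sequence on X₂. -/
def StdSeq2 (R : X₁ × X₂ → X₁ × X₂ → Prop) (S : Set ℤ) (h : ℤ → X₂) (x₀ x₁ : X₁) : Prop :=
  IsIntervalZ S ∧ ¬ (Ge1 R x₀ x₁ ∧ Ge1 R x₁ x₀) ∧
  ∀ i, i ∈ S → (i+1) ∈ S → IP R (x₀, h i) (x₁, h (i+1))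

def BoundedSeq2 (R : X₁ × X₂ → X₁ × X₂ → Prop) (S : Set ℤ) (h : ℤ → X₂) (x₀ : X₁) : Prop :=
  ∃ u v : X₁ × X₂, ∀ i ∈ S, R u (x₀, h i) ∧ R (x₀, h i) v

/-- A9 : Archimedean axiom. -/
def A9 (R : X₁ × X₂ → X₁ × X₂ → Prop) : Prop :=
  (∀ z ∈ NWreg R, ∀ (S : Set ℤ) (g : ℤ → X₁) (y₀ y₁ : X₂),
    StdSeq1 R S g y₀ y₁ → BoundedSeq1 R S g y₀ →
    (∀ i ∈ S, (g i, y₀) ∈ NWz R z ∧ (g i, y₁) ∈ NWz R z) → S.Finite) ∧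
  (∀ z ∈ SEreg R, ∀ (S : Set ℤ) (g : ℤ → X₁) (y₀ y₁ : X₂),
    StdSeq1 R S g y₀ y₁ → BoundedSeq1 R S g y₀ →
    (∀ i ∈ S, (g i, y₀) ∈ SEz R z ∧ (g i, y₁) ∈ SEz R z) → S.Finite) ∧
  (∀ z ∈ NWreg R, ∀ (S : Set ℤ) (h : ℤ → X₂) (x₀ x₁ : X₁),
    StdSeq2 R S h x₀ x₁ → BoundedSeq2 R S h x₀ →
    (∀ i ∈ S, (x₀, h i) ∈ NWz R z ∧ (x₁, h i) ∈ NWz R z) → S.Finite) ∧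
  (∀ z ∈ SEreg R, ∀ (S : Set ℤ) (h : ℤ → X₂) (x₀ x₁ : X₁),
    StdSeq2 R S h x₀ x₁ → BoundedSeq2 R S h x₀ →
    (∀ i ∈ S, (x₀, h i) ∈ SEz R z ∧ (x₁, h i) ∈ SEz R z) → S.Finite)

/-- Structural assumption. -/
def Structural (R : X₁ × X₂ → X₁ × X₂ → Prop) : Prop :=
  (∀ a b : X₁, a ≠ b → ¬ ∀ p : X₂, IP R (a,p) (b,p)) ∧
  (∀ p q : X₂, p ≠ q → ¬ ∀ a : X₁, IP R (a,p) (a,q))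

/-- Order density. -/
def OrderDense (R : X₁ × X₂ → X₁ × X₂ → Prop) : Prop :=
  ∀ x y : X₁ × X₂, SP R x y → ∃ z : X₁ × X₂, SP R x z ∧ SP R z y

/-- Closedness of SE and NW. -/
def Closedness (R : X₁ × X₂ → X₁ × X₂ → Prop) : Prop :=
  (∀ a b : X₁, ∀ p : X₂, (a,p) ∉ NWreg R → (b,p) ∉ SEreg R →
    ∃ c : X₁, (c,p) ∈ Theta R) ∧
  (∀ a : X₁, ∀ p q : X₂, (a,p) ∉ NWreg R → (a,q) ∉ SEreg R →
    ∃ r : X₂, (a,r) ∈ Theta R)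

/-- A capacity on the two-element set (coordinate 1 ↦ `0`, coordinate 2 ↦ `1`). -/
structure Capacity where
  ν : Set (Fin 2) → ℝ
  empty' : ν ∅ = 0
  mono' : ∀ A B : Set (Fin 2), A ⊆ B → ν A ≤ ν B
  norm' : ν Set.univ = 1

/-- Two-point Choquet integral. -/
noncomputable def Choq (c : Capacity) (t₁ t₂ : ℝ) : ℝ :=
  if t₂ ≤ t₁ then c.ν {0} * t₁ + (1 - c.ν {0}) * t₂
  else (1 - c.ν {1}) * t₁ + c.ν {1} * t₂

/-- `ν` together with `(f₁, f₂)` represents `R`. -/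
def Represents (c : Capacity) (f₁ : X₁ → ℝ) (f₂ : X₂ → ℝ)
    (R : X₁ × X₂ → X₁ × X₂ → Prop) : Prop :=
  ∀ x y : X₁ × X₂, R x y ↔ Choq c (f₁ y.1) (f₂ y.2) ≤ Choq c (f₁ x.1) (f₂ x.2)

/-- `(V₁, V₂)` additively represents `R` on `A`. -/
def AddRep (R : X₁ × X₂ → X₁ × X₂ → Prop) (V₁ : X₁ → ℝ) (V₂ : X₂ → ℝ)
    (A : Set (X₁ × X₂)) : Prop :=
  ∀ x ∈ A, ∀ y ∈ A, (R x y ↔ V₁ y.1 + V₂ y.2 ≤ V₁ x.1 + V₂ x.2)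

/-- `Φ` represents `R` on `A`. -/
def RepOn (R : X₁ × X₂ → X₁ × X₂ → Prop) (Φ : X₁ × X₂ → ℝ) (A : Set (X₁ × X₂)) : Prop :=
  ∀ x ∈ A, ∀ y ∈ A, (R x y ↔ Φ y ≤ Φ x)


/-- `S` union of non-extreme SE cones. -/
def SEstar (R : X₁ × X₂ → X₁ × X₂ → Prop) : Set (X₁ × X₂) :=
  ⋃ z ∈ Theta R \ SEext R, SEz R z

/-- Union of non-extreme NW cones. -/
def NWstar (R : X₁ × X₂ → X₁ × X₂ → Prop) : Set (X₁ × X₂) :=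
  ⋃ z ∈ Theta R \ NWext R, NWz R z

/-- First coordinates appearing both in `SEstar` and `NWstar`. -/
def D1 (R : X₁ × X₂ → X₁ × X₂ → Prop) : Set X₁ :=
  {a | (∃ p : X₂, (a,p) ∈ SEstar R) ∧ (∃ q : X₂, (a,q) ∈ NWstar R)}

/-- Second coordinates appearing both in `SEstar` and `NWstar`. -/
def D2 (R : X₁ × X₂ → X₁ × X₂ → Prop) : Set X₂ :=
  {p | (∃ a : X₁, (a,p) ∈ SEstar R) ∧ (∃ b : X₁, (b,p) ∈ NWstar R)}

end ChoquetAxioms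

section CoveringProof

open Set

variable {X₁ X₂ : Type*}

lemma cov_r_refl (R : X₁ × X₂ → X₁ × X₂ → Prop) (h1 : A1 R) (x : X₁ × X₂) : R x x :=
  (h1.1 x x).elim id id

lemma cov_ge1_refl (R : X₁ × X₂ → X₁ × X₂ → Prop) (h1 : A1 R) (a : X₁) : Ge1 R a a :=
  fun _ => cov_r_refl R h1 _

lemma cov_ge2_refl (R : X₁ × X₂ → X₁ × X₂ → Prop) (h1 : A1 R) (p : X₂) : Ge2 R p p :=
  fun _ => cov_r_refl R h1 _

lemma cov_ge1_trans (R : X₁ × X₂ → X₁ × X₂ → Prop) (h1 : A1 R) {a b c : X₁}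
    (hab : Ge1 R a b) (hbc : Ge1 R b c) : Ge1 R a c :=
  fun p => h1.2 _ _ _ (hab p) (hbc p)

lemma cov_ge2_trans (R : X₁ × X₂ → X₁ × X₂ → Prop) (h1 : A1 R) {p q r : X₂}
    (hpq : Ge2 R p q) (hqr : Ge2 R q r) : Ge2 R p r :=
  fun a => h1.2 _ _ _ (hpq a) (hqr a)

lemma cov_ge1_total (R : X₁ × X₂ → X₁ × X₂ → Prop) (h1 : A1 R) (h2 : A2 R) (a b : X₁) :
    Ge1 R a b ∨ Ge1 R b a := by
  by_cases h : Ge1 R a b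
  · exact Or.inl h
  · right
    simp only [Ge1, not_forall] at h
    obtain ⟨p, hp⟩ := h
    have hba : R (b,p) (a,p) := (h1.1 (b,p) (a,p)).elim id (fun h' => absurd h' hp)
    exact h2.1 b a p ⟨hba, hp⟩

lemma cov_ge2_total (R : X₁ × X₂ → X₁ × X₂ → Prop) (h1 : A1 R) (h2 : A2 R) (p q : X₂) :
    Ge2 R p q ∨ Ge2 R q p := by
  by_cases h : Ge2 R p q
  · exact Or.inl h
  · right
    simp only [Ge2, not_forall] at h
    obtain ⟨a, ha⟩ := h
    have hqp : R (a,q) (a,p) := (h1.1 (a,q) (a,p)).elim id (fun h' => absurd h' ha)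
    exact h2.2 q p a ⟨hqp, ha⟩

lemma cov_tc_anti (R : X₁ × X₂ → X₁ × X₂ → Prop) {A B : Set (X₁ × X₂)} (hAB : A ⊆ B)
    (h : TCancel R B) : TCancel R A :=
  fun a b c d p q r s m1 m2 m3 m4 m5 m6 m7 m8 =>
    h a b c d p q r s (hAB m1) (hAB m2) (hAB m3) (hAB m4) (hAB m5) (hAB m6) (hAB m7) (hAB m8)

lemma cov_mem_sez_self (R : X₁ × X₂ → X₁ × X₂ → Prop) (h1 : A1 R) (z : X₁ × X₂) :
    z ∈ SEz R z := ⟨cov_ge1_refl R h1 _, cov_ge2_refl R h1 _⟩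

lemma cov_mem_nwz_self (R : X₁ × X₂ → X₁ × X₂ → Prop) (h1 : A1 R) (z : X₁ × X₂) :
    z ∈ NWz R z := ⟨cov_ge2_refl R h1 _, cov_ge1_refl R h1 _⟩

lemma cov_sez_mono (R : X₁ × X₂ → X₁ × X₂ → Prop) (h1 : A1 R) {x z : X₁ × X₂}
    (hx : x ∈ SEz R z) : SEz R x ⊆ SEz R z :=
  fun _ hy => ⟨cov_ge1_trans R h1 hy.1 hx.1, cov_ge2_trans R h1 hx.2 hy.2⟩

lemma cov_nwz_mono (R : X₁ × X₂ → X₁ × X₂ → Prop) (h1 : A1 R) {x z : X₁ × X₂}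
    (hx : x ∈ NWz R z) : NWz R x ⊆ NWz R z :=
  fun _ hy => ⟨cov_ge2_trans R h1 hy.1 hx.1, cov_ge1_trans R h1 hx.2 hy.2⟩

/-- Absorption: the SE cone of a point of the SE region lies in the SE region. -/
lemma cov_sez_subset_sereg (R : X₁ × X₂ → X₁ × X₂ → Prop) (h1 : A1 R) (h3 : A3 R)
    {z : X₁ × X₂} (hz : z ∈ SEreg R) : SEz R z ⊆ SEreg R := by
  intro x hx
  rcases hz with ⟨w, hw1, hw2, hw3, hw4⟩ | ⟨hext, hB⟩
  · exact Or.inl ⟨w, hw1, hw2, hw3, cov_sez_mono R h1 hw4 hx⟩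
  · by_cases hxz : x = z
    · rw [hxz]; exact Or.inr ⟨hext, hB⟩
    · have hnTC : ¬ TCancel R (NWz R x) := hB x hx hxz
      have hTCse : TCancel R (SEz R x) := (h3 x).resolve_right hnTC
      by_cases hne : ¬ Max1 R x.1 ∧ ¬ Min2 R x.2
      · exact Or.inl ⟨x, hne.1, hne.2, hTCse, cov_mem_sez_self R h1 x⟩
      · have hext' : Max1 R x.1 ∨ Min2 R x.2 := by
          rcases not_and_or.mp hne with h | h
          exacts [Or.inl (not_not.mp h), Or.inr (not_not.mp h)]
        refine Or.inr ⟨hext', fun y hy hyx => ?_⟩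
        by_cases hyz : y = z
        · subst hyz
          intro hTC
          refine hnTC (cov_tc_anti R (fun v hv => ?_) hTC)
          exact ⟨cov_ge2_trans R h1 hv.1 hy.2, cov_ge1_trans R h1 hy.1 hv.2⟩
        · exact hB y (cov_sez_mono R h1 hx hy) hyz

/-- Absorption: the NW cone of a point of the NW region lies in the NW region. -/
lemma cov_nwz_subset_nwreg (R : X₁ × X₂ → X₁ × X₂ → Prop) (h1 : A1 R) (h3 : A3 R)
    {z : X₁ × X₂} (hz : z ∈ NWreg R) : NWz R z ⊆ NWreg R := by
  intro x hx
  rcases hz with ⟨w, hw1, hw2, hw3, hw4⟩ | ⟨hext, hB⟩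
  · exact Or.inl ⟨w, hw1, hw2, hw3, cov_nwz_mono R h1 hw4 hx⟩
  · by_cases hxz : x = z
    · rw [hxz]; exact Or.inr ⟨hext, hB⟩
    · have hnTC : ¬ TCancel R (SEz R x) := hB x hx hxz
      have hTCnw : TCancel R (NWz R x) := (h3 x).resolve_left hnTC
      by_cases hne : ¬ Min1 R x.1 ∧ ¬ Max2 R x.2
      · exact Or.inl ⟨x, hne.1, hne.2, hTCnw, cov_mem_nwz_self R h1 x⟩
      · have hext' : Min1 R x.1 ∨ Max2 R x.2 := by
          rcases not_and_or.mp hne with h | h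
          exacts [Or.inl (not_not.mp h), Or.inr (not_not.mp h)]
        refine Or.inr ⟨hext', fun y hy hyx => ?_⟩
        by_cases hyz : y = z
        · subst hyz
          intro hTC
          refine hnTC (cov_tc_anti R (fun v hv => ?_) hTC)
          exact ⟨cov_ge1_trans R h1 hv.1 hy.2, cov_ge2_trans R h1 hy.1 hv.2⟩
        · exact hB y (cov_nwz_mono R h1 hx hy) hyz

/-- If triple cancellation fails on `SEz x` then `x` belongs to the NW region. -/
lemma cov_m1 (R : X₁ × X₂ → X₁ × X₂ → Prop) (h1 : A1 R) (h3 : A3 R) {x : X₁ × X₂}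
    (h : ¬ TCancel R (SEz R x)) : x ∈ NWreg R := by
  have hTC : TCancel R (NWz R x) := (h3 x).resolve_left h
  by_cases hne : ¬ Min1 R x.1 ∧ ¬ Max2 R x.2
  · exact Or.inl ⟨x, hne.1, hne.2, hTC, cov_mem_nwz_self R h1 x⟩
  · have hext : Min1 R x.1 ∨ Max2 R x.2 := by
      rcases not_and_or.mp hne with h' | h'
      exacts [Or.inl (not_not.mp h'), Or.inr (not_not.mp h')]
    refine Or.inr ⟨hext, fun y hy hyx hTCy => h (cov_tc_anti R ?_ hTCy)⟩
    exact fun v hv => ⟨cov_ge1_trans R h1 hv.1 hy.2, cov_ge2_trans R h1 hy.1 hv.2⟩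

/-- Main lemma (SE half): every point of SE lies in the SE cone of a point of Θ. -/
lemma cov_main_se (R : X₁ × X₂ → X₁ × X₂ → Prop) (h1 : A1 R) (h2 : A2 R) (h3 : A3 R)
    (hclosed : Closedness R) :
    ∀ x ∈ SEreg R, ∃ z ∈ Theta R, x ∈ SEz R z := by
  intro x hxSE
  by_contra hcon
  push_neg at hcon
  obtain ⟨a, p⟩ := x
  have hxNW : (a,p) ∉ NWreg R := fun h => hcon (a,p) ⟨hxSE, h⟩ (cov_mem_sez_self R h1 _)
  -- any point NW of x which is not in NW has its whole row and column inside SE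
  have claim7 : ∀ t : X₁ × X₂, t ∈ NWz R (a,p) → t ∉ NWreg R →
      (∀ b, (b, t.2) ∈ SEreg R) ∧ (∀ q, (t.1, q) ∈ SEreg R) := by
    rintro ⟨t1, t2⟩ ht htNW
    have ht1 : Ge2 R t2 p := ht.1
    have ht2 : Ge1 R a t1 := ht.2
    constructor
    · intro b
      by_contra hb
      obtain ⟨c, hc⟩ := hclosed.1 t1 b t2 htNW hb
      rcases cov_ge1_total R h1 h2 t1 c with h | h
      · exact hcon (c, t2) hc ⟨cov_ge1_trans R h1 ht2 h, ht1⟩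
      · exact htNW (cov_nwz_subset_nwreg R h1 h3 hc.2 ⟨cov_ge2_refl R h1 t2, h⟩)
    · intro q
      by_contra hq
      obtain ⟨r, hr⟩ := hclosed.2 t1 t2 q htNW hq
      rcases cov_ge2_total R h1 h2 r t2 with h | h
      · exact hcon (t1, r) hr ⟨ht2, cov_ge2_trans R h1 h ht1⟩
      · exact htNW (cov_nwz_subset_nwreg R h1 h3 hr.2 ⟨h, cov_ge1_refl R h1 t1⟩)
  obtain ⟨H1, H2⟩ := claim7 (a,p) (cov_mem_nwz_self R h1 _) hxNW
  -- every point NW of x lies in SE and not in NW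
  have claimB : ∀ t : X₁ × X₂, t ∈ NWz R (a,p) → t ∈ SEreg R ∧ t ∉ NWreg R := by
    rintro ⟨t1, t2⟩ ht
    have hs : (a, t2) ∈ SEreg R := H2 t2
    have hsNW : (a, t2) ∉ NWreg R :=
      fun h => hcon (a, t2) ⟨hs, h⟩ ⟨cov_ge1_refl R h1 a, ht.1⟩
    have hrow := (claim7 (a, t2) ⟨ht.1, cov_ge1_refl R h1 a⟩ hsNW).1
    have htSE : (t1, t2) ∈ SEreg R := hrow t1
    exact ⟨htSE, fun h => hcon (t1,t2) ⟨htSE, h⟩ ⟨ht.2, ht.1⟩⟩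
  have stepTC : ∀ t ∈ NWz R (a,p), TCancel R (SEz R t) := by
    intro t ht
    by_contra h
    exact (claimB t ht).2 (cov_m1 R h1 h3 h)
  -- triple cancellation holds globally
  have lb2 : ∀ u v : X₁, ∃ w, Ge1 R u w ∧ Ge1 R v w := by
    intro u v
    rcases cov_ge1_total R h1 h2 u v with h | h
    exacts [⟨v, h, cov_ge1_refl R h1 v⟩, ⟨u, cov_ge1_refl R h1 u, h⟩]
  have ub2 : ∀ u v : X₂, ∃ w, Ge2 R w u ∧ Ge2 R w v := by
    intro u v
    rcases cov_ge2_total R h1 h2 u v with h | h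
    exacts [⟨u, cov_ge2_refl R h1 u, h⟩, ⟨v, h, cov_ge2_refl R h1 v⟩]
  have TCg : ∀ a' b' c' d' : X₁, ∀ p' q' r' s' : X₂,
      R (b',q') (a',p') → R (a',r') (b',s') → R (c',p') (d',q') → R (c',r') (d',s') := by
    intro a' b' c' d' p' q' r' s' hp1 hp2 hp3
    obtain ⟨u1, hu1a, hu1b⟩ := lb2 a a'
    obtain ⟨u2, hu2, hu2b⟩ := lb2 u1 b'
    obtain ⟨u3, hu3, hu3c⟩ := lb2 u2 c'
    obtain ⟨u, hu, hud⟩ := lb2 u3 d'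
    obtain ⟨v1, hv1p, hv1p'⟩ := ub2 p p'
    obtain ⟨v2, hv2, hv2q⟩ := ub2 v1 q'
    obtain ⟨v3, hv3, hv3r⟩ := ub2 v2 r'
    obtain ⟨v, hv, hvs⟩ := ub2 v3 s'
    have gea : Ge1 R a u :=
      cov_ge1_trans R h1 (cov_ge1_trans R h1 (cov_ge1_trans R h1 hu1a hu2) hu3) hu
    have gea' : Ge1 R a' u :=
      cov_ge1_trans R h1 (cov_ge1_trans R h1 (cov_ge1_trans R h1 hu1b hu2) hu3) hu
    have geb' : Ge1 R b' u := cov_ge1_trans R h1 (cov_ge1_trans R h1 hu2b hu3) hu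
    have gec' : Ge1 R c' u := cov_ge1_trans R h1 hu3c hu
    have ged' : Ge1 R d' u := hud
    have gvp : Ge2 R v p :=
      cov_ge2_trans R h1 hv (cov_ge2_trans R h1 hv3 (cov_ge2_trans R h1 hv2 hv1p))
    have gvp' : Ge2 R v p' :=
      cov_ge2_trans R h1 hv (cov_ge2_trans R h1 hv3 (cov_ge2_trans R h1 hv2 hv1p'))
    have gvq' : Ge2 R v q' := cov_ge2_trans R h1 hv (cov_ge2_trans R h1 hv3 hv2q)
    have gvr' : Ge2 R v r' := cov_ge2_trans R h1 hv hv3r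
    have gvs' : Ge2 R v s' := hvs
    have hTC := stepTC (u, v) ⟨gvp, gea⟩
    exact hTC a' b' c' d' p' q' r' s'
      ⟨gea', gvp'⟩ ⟨geb', gvq'⟩ ⟨gea', gvr'⟩ ⟨geb', gvs'⟩
      ⟨gec', gvp'⟩ ⟨ged', gvq'⟩ ⟨gec', gvr'⟩ ⟨ged', gvs'⟩ hp1 hp2 hp3
  have TCany : ∀ A : Set (X₁ × X₂), TCancel R A :=
    fun _ a' b' c' d' p' q' r' s' _ _ _ _ _ _ _ _ => TCg a' b' c' d' p' q' r' s'
  by_cases hex : ∃ c r, Ge1 R c a ∧ ¬ Min1 R c ∧ Ge2 R p r ∧ ¬ Max2 R r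
  · obtain ⟨c, r, hca, hminc, hpr, hmaxr⟩ := hex
    exact hxNW (Or.inl ⟨(c,r), hminc, hmaxr, TCany _, ⟨hpr, hca⟩⟩)
  · by_cases hmin : ∀ c, Ge1 R c a → Min1 R c
    · -- X₁ is trivially ordered
      have hMina : Min1 R a := hmin a (cov_ge1_refl R h1 a)
      have triv1 : ∀ b c : X₁, Ge1 R b c := fun b c => (hmin c (hMina c)) b
      have hy : ∃ y, y ∈ NWz R (a,p) ∧ y ≠ (a,p) ∧ TCancel R (SEz R y) := by
        by_contra h
        push_neg at h
        exact hxNW (Or.inr ⟨Or.inl hMina, h⟩)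
      obtain ⟨y, hyNW, hyne, _⟩ := hy
      have hySE : y ∈ SEreg R := (claimB y hyNW).1
      rcases hySE with ⟨w, hw1, _, _, _⟩ | ⟨_, hB⟩
      · exact hw1 (fun b => triv1 w.1 b)
      · exact hB (a,p) ⟨triv1 a y.1, hyNW.1⟩ (fun h => hyne h.symm) (TCany _)
    · -- otherwise X₂ is trivially ordered
      push_neg at hmin
      obtain ⟨c₀, hc₀a, hc₀⟩ := hmin
      have hMax : ∀ r, Ge2 R p r → Max2 R r := by
        intro r hr
        by_contra hmax
        exact hex ⟨c₀, r, hc₀a, hc₀, hr, hmax⟩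
      have hMaxp : Max2 R p := hMax p (cov_ge2_refl R h1 p)
      have triv2 : ∀ q q' : X₂, Ge2 R q q' := fun q q' => (hMax q (hMaxp q)) q'
      have hy : ∃ y, y ∈ NWz R (a,p) ∧ y ≠ (a,p) ∧ TCancel R (SEz R y) := by
        by_contra h
        push_neg at h
        exact hxNW (Or.inr ⟨Or.inr hMaxp, h⟩)
      obtain ⟨y, hyNW, hyne, _⟩ := hy
      have hySE : y ∈ SEreg R := (claimB y hyNW).1
      rcases hySE with ⟨w, _, hw2, _, _⟩ | ⟨_, hB⟩
      · exact hw2 (fun q => triv2 q w.2)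
      · exact hB (a,p) ⟨hyNW.2, triv2 y.2 p⟩ (fun h => hyne h.symm) (TCany _)

/-- Triple cancellation transported along the coordinate swap. -/
lemma cov_tc_swap (R : X₁ × X₂ → X₁ × X₂ → Prop) {A : Set (X₁ × X₂)} (h : TCancel R A) :
    TCancel (swapRel R) (Prod.swap ⁻¹' A) := by
  intro a b c d p q r s m1 m2 m3 m4 m5 m6 m7 m8 h1' h2' h3'
  exact h p q r s a b c d m1 m2 m5 m6 m3 m4 m7 m8 h1' h3' h2'

lemma cov_sereg_swap (R : X₁ × X₂ → X₁ × X₂ → Prop) :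
    ∀ x : X₂ × X₁, x ∈ SEreg (swapRel R) → (x.2, x.1) ∈ NWreg R := by
  rintro ⟨xp, xa⟩ h
  rcases h with ⟨z, hz1, hz2, hz3, hz4⟩ | ⟨hext, hB⟩
  · refine Or.inl ⟨(z.2, z.1), hz2, hz1, ?_, hz4⟩
    exact cov_tc_swap (swapRel R) hz3
  · refine Or.inr ⟨hext.symm, fun y hy hne hTC => ?_⟩
    exact hB (y.2, y.1) hy (fun h' => hne (congrArg Prod.swap h')) (cov_tc_swap R hTC)

lemma cov_nwreg_swap (R : X₁ × X₂ → X₁ × X₂ → Prop) :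
    ∀ x : X₂ × X₁, x ∈ NWreg (swapRel R) → (x.2, x.1) ∈ SEreg R := by
  rintro ⟨xp, xa⟩ h
  rcases h with ⟨z, hz1, hz2, hz3, hz4⟩ | ⟨hext, hB⟩
  · refine Or.inl ⟨(z.2, z.1), hz2, hz1, ?_, hz4⟩
    exact cov_tc_swap (swapRel R) hz3
  · refine Or.inr ⟨hext.symm, fun y hy hne hTC => ?_⟩
    exact hB (y.2, y.1) hy (fun h' => hne (congrArg Prod.swap h')) (cov_tc_swap R hTC)

lemma cov_a1_swap (R : X₁ × X₂ → X₁ × X₂ → Prop) (h1 : A1 R) : A1 (swapRel R) :=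
  ⟨fun x y => h1.1 _ _, fun x y z => h1.2 _ _ _⟩

lemma cov_a2_swap (R : X₁ × X₂ → X₁ × X₂ → Prop) (h2 : A2 R) : A2 (swapRel R) :=
  ⟨fun a b p hsp q => h2.2 a b p hsp q, fun p q a hsp b => h2.1 p q a hsp b⟩

lemma cov_a3_swap (R : X₁ × X₂ → X₁ × X₂ → Prop) (h3 : A3 R) : A3 (swapRel R) := by
  intro z
  rcases h3 (z.2, z.1) with h | h
  · exact Or.inr (cov_tc_swap R h)
  · exact Or.inl (cov_tc_swap R h)

lemma cov_closed_swap (R : X₁ × X₂ → X₁ × X₂ → Prop) (hcl : Closedness R) :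
    Closedness (swapRel R) := by
  constructor
  · intro a b p hnw hse
    have h1' : (p, a) ∉ SEreg R := fun h => hnw (cov_sereg_swap (swapRel R) (p, a) h)
    have h2' : (p, b) ∉ NWreg R := fun h => hse (cov_nwreg_swap (swapRel R) (p, b) h)
    obtain ⟨r, hr⟩ := hcl.2 p b a h2' h1'
    exact ⟨r, cov_nwreg_swap (swapRel R) (p, r) hr.2, cov_sereg_swap (swapRel R) (p, r) hr.1⟩
  · intro a p q hnw hse
    have h1' : (p, a) ∉ SEreg R := fun h => hnw (cov_sereg_swap (swapRel R) (p, a) h)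
    have h2' : (q, a) ∉ NWreg R := fun h => hse (cov_nwreg_swap (swapRel R) (q, a) h)
    obtain ⟨c, hc⟩ := hcl.1 q p a h2' h1'
    exact ⟨c, cov_nwreg_swap (swapRel R) (c, a) hc.2, cov_sereg_swap (swapRel R) (c, a) hc.1⟩

end CoveringProof

/-- Covering SE and NW by cones based at points of Θ. -/
theorem covering_by_theta_cones {X₁ X₂ : Type*} [Nonempty X₁] [Nonempty X₂]
    (R : X₁ × X₂ → X₁ × X₂ → Prop)
    (h1 : A1 R) (h2 : A2 R) (h3 : A3 R) (hclosed : Closedness R) :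
    (∀ x ∈ SEreg R, ∃ z ∈ Theta R, SEz R x ⊆ SEz R z) ∧
    (∀ y ∈ NWreg R, ∃ z ∈ Theta R, NWz R y ⊆ NWz R z) ∧
    SEreg R = ⋃ z ∈ Theta R, SEz R z ∧
    NWreg R = ⋃ z ∈ Theta R, NWz R z := by
  have main1 := cov_main_se R h1 h2 h3 hclosed
  have main2 : ∀ y ∈ NWreg R, ∃ z ∈ Theta R, y ∈ NWz R z := by
    intro y hy
    have hy' : (y.2, y.1) ∈ SEreg (swapRel R) := cov_nwreg_swap (swapRel R) y hy
    obtain ⟨z', hz'Θ, hz'⟩ := cov_main_se (swapRel R) (cov_a1_swap R h1) (cov_a2_swap R h2)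
      (cov_a3_swap R h3) (cov_closed_swap R hclosed) (y.2, y.1) hy'
    exact ⟨(z'.2, z'.1),
      ⟨cov_nwreg_swap R z' hz'Θ.2, cov_sereg_swap R z' hz'Θ.1⟩, hz'⟩
  refine ⟨?_, ?_, ?_, ?_⟩
  · exact fun x hx => (main1 x hx).imp fun z hz => ⟨hz.1, cov_sez_mono R h1 hz.2⟩
  · exact fun y hy => (main2 y hy).imp fun z hz => ⟨hz.1, cov_nwz_mono R h1 hz.2⟩
  · ext u
    constructor
    · intro hu
      obtain ⟨z, hzΘ, hm⟩ := main1 u hu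
      exact Set.mem_biUnion hzΘ hm
    · intro hu
      obtain ⟨z, hzΘ, hm⟩ := Set.mem_iUnion₂.mp hu
      exact cov_sez_subset_sereg R h1 h3 hzΘ.1 hm
  · ext u
    constructor
    · intro hu
      obtain ⟨z, hzΘ, hm⟩ := main2 u hu
      exact Set.mem_biUnion hzΘ hm
    · intro hu
      obtain ⟨z, hzΘ, hm⟩ := Set.mem_iUnion₂.mp hu
      exact cov_nwz_subset_nwreg R h1 h3 hzΘ.2 hm
end

section
/- Suppose ≽ satisfies A1 (weak order), weak separability (A2), A3, A4, and restricted solvability (A8). Let a₀, b₀ ∈ X₁ with a₀ ≽₁ b₀, and suppose there exists p ∈ X₂ such that a₀p ∈ Θ and b₀p ∈ Θ. Define X_{a₀b₀} = {x₁ ∈ X₁ : a₀ ≽₁ x₁ and x₁ ≽₁ b₀}. Then ≽ satisfies triple cancellation on the set X_{a₀b₀} × X₂. -/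
open Set
open scoped Classical

section StripAux

variable {X₁ X₂ : Type*}

/-- The reversed relation. -/
def flipR (R : X₁ × X₂ → X₁ × X₂ → Prop) : X₁ × X₂ → X₁ × X₂ → Prop := fun x y => R y x

lemma tcancel_flip {R : X₁ × X₂ → X₁ × X₂ → Prop} {A : Set (X₁ × X₂)}
    (h : TCancel R A) : TCancel (flipR R) A :=
  fun a b c d p q r s h1 h2 h3 h4 h5 h6 h7 h8 u1 u2 u3 =>
    h b a d c q p s r h2 h1 h4 h3 h6 h5 h8 h7 u1 u2 u3

lemma tcancel_unflip {R : X₁ × X₂ → X₁ × X₂ → Prop} {A : Set (X₁ × X₂)}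
    (h : TCancel (flipR R) A) : TCancel R A :=
  fun a b c d p q r s h1 h2 h3 h4 h5 h6 h7 h8 u1 u2 u3 =>
    h b a d c q p s r h2 h1 h4 h3 h6 h5 h8 h7 u1 u2 u3

lemma nwz_flip (R : X₁ × X₂ → X₁ × X₂ → Prop) (z : X₁ × X₂) :
    NWz (flipR R) z = SEz R z := Set.ext fun _ => and_comm

lemma sez_flip (R : X₁ × X₂ → X₁ × X₂ → Prop) (z : X₁ × X₂) :
    SEz (flipR R) z = NWz R z := Set.ext fun _ => and_comm

lemma sereg_flip (R : X₁ × X₂ → X₁ × X₂ → Prop) : SEreg (flipR R) = NWreg R := by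
  ext x
  constructor
  · rintro (⟨z, hz1, hz2, hTC, hmem⟩ | ⟨hd, hy⟩)
    · rw [sez_flip] at hTC hmem
      exact Or.inl ⟨z, hz1, hz2, tcancel_unflip hTC, hmem⟩
    · refine Or.inr ⟨hd, fun y hy' hne hTC => hy y ?_ hne ?_⟩
      · rw [sez_flip]; exact hy'
      · rw [nwz_flip]; exact tcancel_flip hTC
  · rintro (⟨z, hz1, hz2, hTC, hmem⟩ | ⟨hd, hy⟩)
    · refine Or.inl ⟨z, hz1, hz2, ?_, ?_⟩
      · rw [sez_flip]; exact tcancel_flip hTC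
      · rw [sez_flip]; exact hmem
    · refine Or.inr ⟨hd, fun y hy' hne hTC => ?_⟩
      rw [sez_flip] at hy'
      rw [nwz_flip] at hTC
      exact hy y hy' hne (tcancel_unflip hTC)

lemma nwreg_flip (R : X₁ × X₂ → X₁ × X₂ → Prop) : NWreg (flipR R) = SEreg R := by
  ext x
  constructor
  · rintro (⟨z, hz1, hz2, hTC, hmem⟩ | ⟨hd, hy⟩)
    · rw [nwz_flip] at hTC hmem
      exact Or.inl ⟨z, hz1, hz2, tcancel_unflip hTC, hmem⟩
    · refine Or.inr ⟨hd, fun y hy' hne hTC => hy y ?_ hne ?_⟩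
      · rw [nwz_flip]; exact hy'
      · rw [sez_flip]; exact tcancel_flip hTC
  · rintro (⟨z, hz1, hz2, hTC, hmem⟩ | ⟨hd, hy⟩)
    · refine Or.inl ⟨z, hz1, hz2, ?_, ?_⟩
      · rw [nwz_flip]; exact tcancel_flip hTC
      · rw [nwz_flip]; exact hmem
    · refine Or.inr ⟨hd, fun y hy' hne hTC => ?_⟩
      rw [nwz_flip] at hy'
      rw [sez_flip] at hTC
      exact hy y hy' hne (tcancel_unflip hTC)

lemma theta_flip {R : X₁ × X₂ → X₁ × X₂ → Prop} {x : X₁ × X₂}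
    (h : x ∈ Theta R) : x ∈ Theta (flipR R) := by
  refine ⟨?_, ?_⟩
  · rw [sereg_flip]; exact h.2
  · rw [nwreg_flip]; exact h.1

lemma a1_flip {R : X₁ × X₂ → X₁ × X₂ → Prop} (h : A1 R) : A1 (flipR R) :=
  ⟨fun x y => h.1 y x, fun x y z hxy hyz => h.2 z y x hyz hxy⟩

lemma a2_flip {R : X₁ × X₂ → X₁ × X₂ → Prop} (h : A2 R) : A2 (flipR R) :=
  ⟨fun a b t hsp q => h.1 b a t hsp q, fun t u a hsp b => h.2 u t a hsp b⟩

lemma a3_flip {R : X₁ × X₂ → X₁ × X₂ → Prop} (h : A3 R) : A3 (flipR R) := by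
  intro z
  rcases h z with hse | hnw
  · right; rw [nwz_flip]; exact tcancel_flip hse
  · left; rw [sez_flip]; exact tcancel_flip hnw

lemma a8_flip {R : X₁ × X₂ → X₁ × X₂ → Prop} (h : A8 R) : A8 (flipR R) := by
  refine ⟨fun a t u y h1 h2 => ?_, fun t a c y h1 h2 => ?_⟩
  · obtain ⟨b, hb1, hb2⟩ := h.1 a u t y h2 h1
    exact ⟨b, hb2, hb1⟩
  · obtain ⟨b, hb1, hb2⟩ := h.2 t c a y h2 h1
    exact ⟨b, hb2, hb1⟩

lemma ess1_flip {R : X₁ × X₂ → X₁ × X₂ → Prop} {A : Set (X₁ × X₂)}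
    (h : Ess1 (flipR R) A) : Ess1 R A := by
  obtain ⟨a, b, t, m1, m2, hsp⟩ := h
  exact ⟨b, a, t, m2, m1, hsp⟩

lemma ess2_flip {R : X₁ × X₂ → X₁ × X₂ → Prop} {A : Set (X₁ × X₂)}
    (h : Ess2 (flipR R) A) : Ess2 R A := by
  obtain ⟨t, u, a, m1, m2, hsp⟩ := h
  exact ⟨u, t, a, m2, m1, hsp⟩

lemma a4_flip {R : X₁ × X₂ → X₁ × X₂ → Prop} (h : A4 R) : A4 (flipR R) := by
  intro a b c d p q r s hpat u1 u2 u3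
  refine h b a d c q p s r ?_ u1 u2 u3
  rcases hpat with ⟨⟨m1,m2,m3,m4⟩,⟨m5,m6,m7,m8⟩⟩ | hpat
  · rw [nwreg_flip] at m1 m2 m3 m4 m5 m6 m7 m8
    exact Or.inr (Or.inl ⟨⟨m2,m1,m4,m3⟩,⟨m6,m5,m8,m7⟩⟩)
  rcases hpat with ⟨⟨m1,m2,m3,m4⟩,⟨m5,m6,m7,m8⟩⟩ | hpat
  · rw [sereg_flip] at m1 m2 m3 m4 m5 m6 m7 m8
    exact Or.inl ⟨⟨m2,m1,m4,m3⟩,⟨m6,m5,m8,m7⟩⟩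
  rcases hpat with ⟨⟨m1,m2,m3,m4⟩, he, ⟨m5,m6,m7,m8⟩⟩ | hpat
  · rw [nwreg_flip] at m1 m2 m3 m4
    rw [sereg_flip] at m5 m6 m7 m8
    rw [nwreg_flip] at he
    exact Or.inr (Or.inr (Or.inr (Or.inl ⟨⟨m2,m1,m4,m3⟩, ess2_flip he, ⟨m6,m5,m8,m7⟩⟩)))
  rcases hpat with ⟨⟨m1,m2,m3,m4⟩, he, ⟨m5,m6,m7,m8⟩⟩ | hpat
  · rw [sereg_flip] at m1 m2 m3 m4
    rw [nwreg_flip] at m5 m6 m7 m8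
    rw [sereg_flip] at he
    exact Or.inr (Or.inr (Or.inl ⟨⟨m2,m1,m4,m3⟩, ess2_flip he, ⟨m6,m5,m8,m7⟩⟩))
  rcases hpat with ⟨⟨m1,m2,m3,m4⟩, he, ⟨m5,m6,m7,m8⟩⟩ | ⟨⟨m1,m2,m3,m4⟩, he, ⟨m5,m6,m7,m8⟩⟩
  · rw [nwreg_flip] at m1 m2 m3 m4
    rw [sereg_flip] at m5 m6 m7 m8
    rw [nwreg_flip] at he
    exact Or.inr (Or.inr (Or.inr (Or.inr (Or.inr ⟨⟨m2,m1,m4,m3⟩, ess1_flip he, ⟨m6,m5,m8,m7⟩⟩))))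
  · rw [sereg_flip] at m1 m2 m3 m4
    rw [nwreg_flip] at m5 m6 m7 m8
    rw [sereg_flip] at he
    exact Or.inr (Or.inr (Or.inr (Or.inr (Or.inl ⟨⟨m2,m1,m4,m3⟩, ess1_flip he, ⟨m6,m5,m8,m7⟩⟩))))

/-- Totality of the induced order on the second coordinate. -/
lemma ge2_total {R : X₁ × X₂ → X₁ × X₂ → Prop} (h1 : A1 R) (h2 : A2 R) :
    ∀ u v : X₂, Ge2 R u v ∨ Ge2 R v u := by
  intro u v
  by_cases h : Ge2 R u v
  · exact Or.inl h
  · right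
    simp only [Ge2, not_forall] at h
    obtain ⟨x, hx⟩ := h
    exact h2.2 v u x ⟨(h1.1 _ _).resolve_left hx, hx⟩

/-- Totality of the induced order on the first coordinate. -/
lemma ge1_total {R : X₁ × X₂ → X₁ × X₂ → Prop} (h1 : A1 R) (h2 : A2 R) :
    ∀ u v : X₁, Ge1 R u v ∨ Ge1 R v u := by
  intro u v
  by_cases h : Ge1 R u v
  · exact Or.inl h
  · right
    simp only [Ge1, not_forall] at h
    obtain ⟨x, hx⟩ := h
    exact h2.1 v u x ⟨(h1.1 _ _).resolve_left hx, hx⟩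

variable {X₁ X₂ : Type*} {R : X₁ × X₂ → X₁ × X₂ → Prop}

lemma ge2_trans (h1 : A1 R) {u v w : X₂} (h : Ge2 R u v) (h' : Ge2 R v w) : Ge2 R u w :=
  fun x => h1.2 _ _ _ (h x) (h' x)

lemma ge1_trans (h1 : A1 R) {u v w : X₁} (h : Ge1 R u v) (h' : Ge1 R v w) : Ge1 R u w :=
  fun x => h1.2 _ _ _ (h x) (h' x)

lemma ge2_refl (h1 : A1 R) (u : X₂) : Ge2 R u u := fun x => (h1.1 _ _).elim id id

lemma ge1_refl (h1 : A1 R) (u : X₁) : Ge1 R u u := fun x => (h1.1 _ _).elim id id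

/-- Either the conclusion of the triple-cancellation instance holds outright (degenerate
cases), or we can find the two "slab" cones through `(a₀,p)` and `(b₀,p)`. -/
lemma slabs_or_conc (h1 : A1 R) {a₀ b₀ : X₁} {p : X₂}
    (ha : (a₀, p) ∈ Theta R) (hb : (b₀, p) ∈ Theta R)
    {a b c d : X₁} {p₁ q r s : X₂}
    (haa : Ge1 R a₀ a) (hab' : Ge1 R a b₀) (hba : Ge1 R a₀ b) (hbb' : Ge1 R b b₀)
    (hca : Ge1 R a₀ c) (hcb' : Ge1 R c b₀) (hda : Ge1 R a₀ d) (hdb' : Ge1 R d b₀)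
    (hP1 : R (b,q) (a,p₁)) (hP2 : R (a,r) (b,s)) (hP3 : R (c,p₁) (d,q)) :
    R (c,r) (d,s) ∨
    ∃ z1 z4 : X₁ × X₂, ¬ Min1 R z1.1 ∧ ¬ Max2 R z1.2 ∧ TCancel R (NWz R z1) ∧
      Ge2 R p z1.2 ∧ Ge1 R z1.1 a₀ ∧ ¬ Max1 R z4.1 ∧ ¬ Min2 R z4.2 ∧
      TCancel R (SEz R z4) ∧ Ge1 R b₀ z4.1 ∧ Ge2 R z4.2 p := by
  have htr := h1.2
  have rowdone : Ge1 R c a → Ge1 R b d → R (c,r) (d,s) := fun hx hy =>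
    htr _ _ _ (hx r) (htr _ _ _ hP2 (hy s))
  rcases ha.2 with ⟨z1, hz1m, hz1M, hTC1, hz1mem⟩ | ⟨hdeg1, _⟩
  · rcases hb.1 with ⟨z4, hz4M, hz4m, hTC4, hz4mem⟩ | ⟨hdeg4, _⟩
    · exact Or.inr ⟨z1, z4, hz1m, hz1M, hTC1, hz1mem.1, hz1mem.2, hz4M, hz4m, hTC4,
        hz4mem.1, hz4mem.2⟩
    · rcases hdeg4 with hMax1 | hMin2
      · exact Or.inl (rowdone (ge1_trans h1 hcb' (hMax1 a)) (ge1_trans h1 hbb' (hMax1 d)))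
      · have memNW : ∀ (x : X₁) (t : X₂), Ge1 R a₀ x → (x,t) ∈ NWz R z1 :=
          fun x t hx => ⟨ge2_trans h1 (hMin2 t) hz1mem.1, ge1_trans h1 hz1mem.2 hx⟩
        exact Or.inl (hTC1 a b c d p₁ q r s (memNW a p₁ haa) (memNW b q hba)
          (memNW a r haa) (memNW b s hba) (memNW c p₁ hca) (memNW d q hda)
          (memNW c r hca) (memNW d s hda) hP1 hP2 hP3)
  · rcases hdeg1 with hMin1 | hMax2
    · exact Or.inl (rowdone (ge1_trans h1 (hMin1 c) haa) (ge1_trans h1 (hMin1 b) hda))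
    · rcases hb.1 with ⟨z4, hz4M, hz4m, hTC4, hz4mem⟩ | ⟨hdeg4, _⟩
      · have memSE : ∀ (x : X₁) (t : X₂), Ge1 R x b₀ → (x,t) ∈ SEz R z4 :=
          fun x t hx => ⟨ge1_trans h1 hx hz4mem.1, ge2_trans h1 hz4mem.2 (hMax2 t)⟩
        exact Or.inl (hTC4 a b c d p₁ q r s (memSE a p₁ hab') (memSE b q hbb')
          (memSE a r hab') (memSE b s hbb') (memSE c p₁ hcb') (memSE d q hdb')
          (memSE c r hcb') (memSE d s hdb') hP1 hP2 hP3)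
      · rcases hdeg4 with hMax1 | hMin2
        · exact Or.inl (rowdone (ge1_trans h1 hcb' (hMax1 a)) (ge1_trans h1 hbb' (hMax1 d)))
        · have hrp₁ : Ge2 R r p₁ := ge2_trans h1 (hMin2 r) (hMax2 p₁)
          have hqs : Ge2 R q s := ge2_trans h1 (hMin2 q) (hMax2 s)
          exact Or.inl (htr _ _ _ (hrp₁ c) (htr _ _ _ hP3 (hqs d)))

/-- Transfer rule, all four columns above `p`. -/
lemma ruleNN (h1 : A1 R) {a₀ : X₁} {p : X₂} {z1 : X₁ × X₂}
    (hTC1 : TCancel R (NWz R z1)) (hz1c : Ge2 R p z1.2) (hz1r : Ge1 R z1.1 a₀) :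
    ∀ (w x y z : X₁) (P Q RR S : X₂),
      Ge1 R a₀ w → Ge1 R a₀ x → Ge1 R a₀ y → Ge1 R a₀ z →
      Ge2 R P p → Ge2 R Q p → Ge2 R RR p → Ge2 R S p →
      R (x,Q) (w,P) → R (w,RR) (x,S) → R (y,P) (z,Q) → R (y,RR) (z,S) := by
  intro w x y z P Q RR S hw hx hy hz hP hQ hRR hS u1 u2 u3
  have mem : ∀ (x' : X₁) (t : X₂), Ge1 R a₀ x' → Ge2 R t p → (x',t) ∈ NWz R z1 :=
    fun x' t hx' ht => ⟨ge2_trans h1 ht hz1c, ge1_trans h1 hz1r hx'⟩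
  exact hTC1 w x y z P Q RR S (mem w P hw hP) (mem x Q hx hQ) (mem w RR hw hRR)
    (mem x S hx hS) (mem y P hy hP) (mem z Q hz hQ) (mem y RR hy hRR) (mem z S hz hS)
    u1 u2 u3

/-- Transfer rule, all four columns below `p`. -/
lemma ruleSS (h1 : A1 R) {b₀ : X₁} {p : X₂} {z4 : X₁ × X₂}
    (hTC4 : TCancel R (SEz R z4)) (hz4r : Ge1 R b₀ z4.1) (hz4c : Ge2 R z4.2 p) :
    ∀ (w x y z : X₁) (P Q RR S : X₂),
      Ge1 R w b₀ → Ge1 R x b₀ → Ge1 R y b₀ → Ge1 R z b₀ →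
      Ge2 R p P → Ge2 R p Q → Ge2 R p RR → Ge2 R p S →
      R (x,Q) (w,P) → R (w,RR) (x,S) → R (y,P) (z,Q) → R (y,RR) (z,S) := by
  intro w x y z P Q RR S hw hx hy hz hP hQ hRR hS u1 u2 u3
  have mem : ∀ (x' : X₁) (t : X₂), Ge1 R x' b₀ → Ge2 R p t → (x',t) ∈ SEz R z4 :=
    fun x' t hx' ht => ⟨ge1_trans h1 hx' hz4r, ge2_trans h1 hz4c ht⟩
  exact hTC4 w x y z P Q RR S (mem w P hw hP) (mem x Q hx hQ) (mem w RR hw hRR)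
    (mem x S hx hS) (mem y P hy hP) (mem z Q hz hQ) (mem y RR hy hRR) (mem z S hz hS)
    u1 u2 u3

/-- Transfer rule, premise pair above `p`, conclusion pair below `p`. -/
lemma ruleNS (h1 : A1 R) (h4 : A4 R) {a₀ b₀ : X₁} {p : X₂} {z1 z4 : X₁ × X₂}
    (hz1m : ¬ Min1 R z1.1) (hz1M : ¬ Max2 R z1.2) (hTC1 : TCancel R (NWz R z1))
    (hz1c : Ge2 R p z1.2) (hz1r : Ge1 R z1.1 a₀)
    (hz4M : ¬ Max1 R z4.1) (hz4m : ¬ Min2 R z4.2) (hTC4 : TCancel R (SEz R z4))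
    (hz4r : Ge1 R b₀ z4.1) (hz4c : Ge2 R z4.2 p) :
    ∀ (w x y z : X₁) (P Q RR S : X₂),
      Ge1 R a₀ w → Ge1 R w b₀ → Ge1 R a₀ x → Ge1 R x b₀ →
      Ge1 R a₀ y → Ge1 R y b₀ → Ge1 R a₀ z → Ge1 R z b₀ →
      Ge2 R P p → Ge2 R Q p → Ge2 R p RR → Ge2 R p S →
      R (x,Q) (w,P) → R (w,RR) (x,S) → R (y,P) (z,Q) → R (y,RR) (z,S) := by
  intro w x y z P Q RR S hw1 hw2 hx1 hx2 hy1 hy2 hz1' hz2' hP hQ hRR hS u1 u2 u3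
  have memNWreg : ∀ (x' : X₁) (t : X₂), Ge1 R a₀ x' → Ge2 R t p → (x',t) ∈ NWreg R :=
    fun x' t hx' ht =>
      Or.inl ⟨z1, hz1m, hz1M, hTC1, ge2_trans h1 ht hz1c, ge1_trans h1 hz1r hx'⟩
  have memSEreg : ∀ (x' : X₁) (t : X₂), Ge1 R x' b₀ → Ge2 R p t → (x',t) ∈ SEreg R :=
    fun x' t hx' ht =>
      Or.inl ⟨z4, hz4M, hz4m, hTC4, ge1_trans h1 hx' hz4r, ge2_trans h1 hz4c ht⟩
  have gp : Ge2 R p p := ge2_refl h1 p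
  by_cases hEss : Ess1 R (NWreg R)
  · exact h4 w x y z P Q RR S
      (Or.inr (Or.inr (Or.inr (Or.inr (Or.inl
        ⟨⟨memNWreg w P hw1 hP, memNWreg x Q hx1 hQ, memNWreg y P hy1 hP,
          memNWreg z Q hz1' hQ⟩, hEss,
         ⟨memSEreg w RR hw2 hRR, memSEreg x S hx2 hS, memSEreg y RR hy2 hRR,
          memSEreg z S hz2' hS⟩⟩))))) u1 u2 u3
  · have tie : ∀ (x₁ x₂ : X₁), Ge1 R a₀ x₁ → Ge1 R a₀ x₂ → R (x₁,p) (x₂,p) := by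
      intro x₁ x₂ hh₁ hh₂
      by_contra hcon
      exact hEss ⟨x₂, x₁, p, memNWreg x₂ p hh₂ gp, memNWreg x₁ p hh₁ gp,
        (h1.1 _ _).resolve_left hcon, hcon⟩
    have memSE : ∀ (x' : X₁) (t : X₂), Ge1 R x' b₀ → Ge2 R p t → (x',t) ∈ SEz R z4 :=
      fun x' t hx' ht => ⟨ge1_trans h1 hx' hz4r, ge2_trans h1 hz4c ht⟩
    exact hTC4 w x y z p p RR S (memSE w p hw2 gp) (memSE x p hx2 gp)
      (memSE w RR hw2 hRR) (memSE x S hx2 hS) (memSE y p hy2 gp) (memSE z p hz2' gp)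
      (memSE y RR hy2 hRR) (memSE z S hz2' hS)
      (tie x w hx1 hw1) u2 (tie y z hy1 hz1')

/-- Transfer rule, premise pair below `p`, conclusion pair above `p`. -/
lemma ruleSN (h1 : A1 R) (h4 : A4 R) {a₀ b₀ : X₁} {p : X₂} {z1 z4 : X₁ × X₂}
    (hz1m : ¬ Min1 R z1.1) (hz1M : ¬ Max2 R z1.2) (hTC1 : TCancel R (NWz R z1))
    (hz1c : Ge2 R p z1.2) (hz1r : Ge1 R z1.1 a₀)
    (hz4M : ¬ Max1 R z4.1) (hz4m : ¬ Min2 R z4.2) (hTC4 : TCancel R (SEz R z4))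
    (hz4r : Ge1 R b₀ z4.1) (hz4c : Ge2 R z4.2 p) :
    ∀ (w x y z : X₁) (P Q RR S : X₂),
      Ge1 R a₀ w → Ge1 R w b₀ → Ge1 R a₀ x → Ge1 R x b₀ →
      Ge1 R a₀ y → Ge1 R y b₀ → Ge1 R a₀ z → Ge1 R z b₀ →
      Ge2 R p P → Ge2 R p Q → Ge2 R RR p → Ge2 R S p →
      R (x,Q) (w,P) → R (w,RR) (x,S) → R (y,P) (z,Q) → R (y,RR) (z,S) := by
  intro w x y z P Q RR S hw1 hw2 hx1 hx2 hy1 hy2 hz1' hz2' hP hQ hRR hS u1 u2 u3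
  have memNWreg : ∀ (x' : X₁) (t : X₂), Ge1 R a₀ x' → Ge2 R t p → (x',t) ∈ NWreg R :=
    fun x' t hx' ht =>
      Or.inl ⟨z1, hz1m, hz1M, hTC1, ge2_trans h1 ht hz1c, ge1_trans h1 hz1r hx'⟩
  have memSEreg : ∀ (x' : X₁) (t : X₂), Ge1 R x' b₀ → Ge2 R p t → (x',t) ∈ SEreg R :=
    fun x' t hx' ht =>
      Or.inl ⟨z4, hz4M, hz4m, hTC4, ge1_trans h1 hx' hz4r, ge2_trans h1 hz4c ht⟩
  have gp : Ge2 R p p := ge2_refl h1 p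
  by_cases hEss : Ess1 R (SEreg R)
  · exact h4 w x y z P Q RR S
      (Or.inr (Or.inr (Or.inr (Or.inr (Or.inr
        ⟨⟨memSEreg w P hw2 hP, memSEreg x Q hx2 hQ, memSEreg y P hy2 hP,
          memSEreg z Q hz2' hQ⟩, hEss,
         ⟨memNWreg w RR hw1 hRR, memNWreg x S hx1 hS, memNWreg y RR hy1 hRR,
          memNWreg z S hz1' hS⟩⟩))))) u1 u2 u3
  · have tie : ∀ (x₁ x₂ : X₁), Ge1 R x₁ b₀ → Ge1 R x₂ b₀ → R (x₁,p) (x₂,p) := by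
      intro x₁ x₂ hh₁ hh₂
      by_contra hcon
      exact hEss ⟨x₂, x₁, p, memSEreg x₂ p hh₂ gp, memSEreg x₁ p hh₁ gp,
        (h1.1 _ _).resolve_left hcon, hcon⟩
    have memNW : ∀ (x' : X₁) (t : X₂), Ge1 R a₀ x' → Ge2 R t p → (x',t) ∈ NWz R z1 :=
      fun x' t hx' ht => ⟨ge2_trans h1 ht hz1c, ge1_trans h1 hz1r hx'⟩
    exact hTC1 w x y z p p RR S (memNW w p hw1 gp) (memNW x p hx1 gp)
      (memNW w RR hw1 hRR) (memNW x S hx1 hS) (memNW y p hy1 gp) (memNW z p hz1' gp)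
      (memNW y RR hy1 hRR) (memNW z S hz1' hS)
      (tie x w hx2 hw2) u2 (tie y z hy2 hz2')

/-- Solvability anchor at column `p`, adjusted to lie in the strip. -/
lemma anchor_row (h1 : A1 R) (h8 : A8 R) {a₀ b₀ : X₁} (hab : Ge1 R a₀ b₀)
    {p : X₂} {y : X₁ × X₂} {u v : X₁} (hu : Ge1 R a₀ u) (hv : Ge1 R v b₀)
    (hup : R (u,p) y) (hlow : R y (v,p)) (h2 : A2 R) :
    ∃ e, Ge1 R a₀ e ∧ Ge1 R e b₀ ∧ R (e,p) y ∧ R y (e,p) := by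
  obtain ⟨e₀, he1, he2⟩ := h8.2 p u v y hup hlow
  rcases ge1_total h1 h2 a₀ e₀ with hA | hA
  · rcases ge1_total h1 h2 e₀ b₀ with hB | hB
    · exact ⟨e₀, hA, hB, he1, he2⟩
    · exact ⟨b₀, hab, ge1_refl h1 b₀, h1.2 _ _ _ (hB p) he1, h1.2 _ _ _ hlow (hv p)⟩
  · exact ⟨a₀, ge1_refl h1 a₀, hab, h1.2 _ _ _ (hu p) hup, h1.2 _ _ _ he2 (hA p)⟩

/-- The mixed class: bridge pair `(p₁,q)` above `p`, `r` above `p`, `s` below `p`. -/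
lemma classNNNS (h1 : A1 R) (h2 : A2 R) (h4 : A4 R) (h8 : A8 R)
    {a₀ b₀ : X₁} {p : X₂} (hab : Ge1 R a₀ b₀)
    (ha : (a₀, p) ∈ Theta R) (hb : (b₀, p) ∈ Theta R)
    {a b c d : X₁} {p₁ q r s : X₂}
    (haa : Ge1 R a₀ a) (hab' : Ge1 R a b₀) (hba : Ge1 R a₀ b) (hbb' : Ge1 R b b₀)
    (hca : Ge1 R a₀ c) (hcb' : Ge1 R c b₀) (hda : Ge1 R a₀ d) (hdb' : Ge1 R d b₀)
    (hσp₁ : Ge2 R p₁ p) (hσq : Ge2 R q p) (hσr : Ge2 R r p) (hσs : Ge2 R p s)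
    (hP1 : R (b,q) (a,p₁)) (hP2 : R (a,r) (b,s)) (hP3 : R (c,p₁) (d,q)) :
    R (c,r) (d,s) := by
  have tot := h1.1
  have htr := h1.2
  rcases slabs_or_conc h1 ha hb haa hab' hba hbb' hca hcb' hda hdb' hP1 hP2 hP3 with
    done | ⟨z1, z4, hz1m, hz1M, hTC1, hz1c, hz1r, hz4M, hz4m, hTC4, hz4r, hz4c⟩
  · exact done
  have tNN := ruleNN h1 hTC1 hz1c hz1r
  have tNS := ruleNS h1 h4 hz1m hz1M hTC1 hz1c hz1r hz4M hz4m hTC4 hz4r hz4c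
  have tSN := ruleSN h1 h4 hz1m hz1M hTC1 hz1c hz1r hz4M hz4m hTC4 hz4r hz4c
  have gp : Ge2 R p p := ge2_refl h1 p
  rcases tot (a,r) (b,p) with hW1 | hW1
  · exact htr _ _ _
      (tNN a b c d p₁ q r p haa hba hca hda hσp₁ hσq hσr gp hP1 hW1 hP3) (hσs d)
  rcases tot (a,p) (b,s) with hW2 | hW2
  · exact htr _ _ _ (hσr c)
      (tNS a b c d p₁ q p s haa hab' hba hbb' hca hcb' hda hdb' hσp₁ hσq gp hσs hP1 hW2 hP3)
  rcases tot (c,p) (d,s) with hW3 | hW3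
  · exact htr _ _ _ (hσr c) hW3
  rcases tot (c,r) (d,p) with hW4 | hW4
  · exact htr _ _ _ hW4 (hσs d)
  obtain ⟨e, hea, heb, he1, he2⟩ := anchor_row h1 h8 hab hba hab' hW1 (hσr a) h2
  obtain ⟨e', hea', heb', he1', he2'⟩ := anchor_row h1 h8 hab hba hab' (hσs b) hW2 h2
  obtain ⟨h', hha', hhb', hh1', hh2'⟩ := anchor_row h1 h8 hab hda hcb' (hσs d) hW3 h2
  obtain ⟨h'', hha'', hhb'', hh1'', hh2''⟩ := anchor_row h1 h8 hab hda hcb' hW4 (hσr c) h2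
  have hbq_e' : R (b,q) (e',p) := htr _ _ _ (hσq b) (htr _ _ _ (hσs b) he2')
  have ruleFour : R (d,q) (h',p) :=
    tSN b e' d h' s p q p hba hbb' hea' heb' hda hdb' hha' hhb' hσs gp hσq gp
      he1' hbq_e' hh2'
  rcases tot (a,r) (a,p₁) with hD1 | hD1
  · have k1 : R (e,p) (a,p₁) := htr _ _ _ he1 hD1
    have k2 : R (h'',p) (c,p₁) :=
      tNN e a h'' c p r p p₁ hea haa hha'' hca gp hσr gp hσp₁ he2 k1 hh1''
    exact htr _ _ _ hh2'' (htr _ _ _ k2 (htr _ _ _ hP3 (htr _ _ _ ruleFour hh1')))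
  · have hlowv : R (a,p₁) (e,p) := htr _ _ _ hD1 he2
    by_cases hup : ∃ t, R (e,t) (a,p₁)
    · obtain ⟨t₀, ht₀⟩ := hup
      obtain ⟨v, hv1, hv2⟩ := h8.1 e t₀ p (a,p₁) ht₀ hlowv
      rcases ge2_total h1 h2 v p with hσv | hσv
      · have prem1 : R (b,q) (e,v) := htr _ _ _ hP1 hv2
        have prem2 : R (e,p) (b,s) := htr _ _ _ he1 hP2
        have k3 : R (h'',v) (c,p₁) :=
          tNN e a h'' c p r v p₁ hea haa hha'' hca gp hσr hσv hσp₁ he2 hv1 hh1''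
        have prem3 : R (h'',v) (d,q) := htr _ _ _ k3 hP3
        have main : R (h'',p) (d,s) :=
          tNS e b h'' d v q p s hea heb hba hbb' hha'' hhb'' hda hdb' hσv hσq gp hσs
            prem1 prem2 prem3
        exact htr _ _ _ hh2'' main
      · have k4 : R (e,p) (a,p₁) := htr _ _ _ (hσv e) hv1
        have k2 : R (h'',p) (c,p₁) :=
          tNN e a h'' c p r p p₁ hea haa hha'' hca gp hσr gp hσp₁ he2 k4 hh1''
        exact htr _ _ _ hh2'' (htr _ _ _ k2 (htr _ _ _ hP3 (htr _ _ _ ruleFour hh1')))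
    · push_neg at hup
      have hsp : SP R (a,p₁) (e,p₁) := ⟨(tot _ _).resolve_right (hup p₁), hup p₁⟩
      have hae : Ge1 R a e := h2.1 a e p₁ hsp
      have hW2' : R (a,p) (b,s) := htr _ _ _ (hae p) (htr _ _ _ he1 hP2)
      exact htr _ _ _ (hσr c)
        (tNS a b c d p₁ q p s haa hab' hba hbb' hca hcb' hda hdb' hσp₁ hσq gp hσs
          hP1 hW2' hP3)

/-- The mixed class: bridge pair `(p₁,q)` mixed with `p₁` above, `q` below, and `r,s` above. -/
lemma classNSNN (h1 : A1 R) (h2 : A2 R) (h4 : A4 R) (h8 : A8 R)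
    {a₀ b₀ : X₁} {p : X₂} (hab : Ge1 R a₀ b₀)
    (ha : (a₀, p) ∈ Theta R) (hb : (b₀, p) ∈ Theta R)
    {a b c d : X₁} {p₁ q r s : X₂}
    (haa : Ge1 R a₀ a) (hab' : Ge1 R a b₀) (hba : Ge1 R a₀ b) (hbb' : Ge1 R b b₀)
    (hca : Ge1 R a₀ c) (hcb' : Ge1 R c b₀) (hda : Ge1 R a₀ d) (hdb' : Ge1 R d b₀)
    (hσp₁ : Ge2 R p₁ p) (hσq : Ge2 R p q) (hσr : Ge2 R r p) (hσs : Ge2 R s p)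
    (hP1 : R (b,q) (a,p₁)) (hP2 : R (a,r) (b,s)) (hP3 : R (c,p₁) (d,q)) :
    R (c,r) (d,s) := by
  have tot := h1.1
  have htr := h1.2
  rcases slabs_or_conc h1 ha hb haa hab' hba hbb' hca hcb' hda hdb' hP1 hP2 hP3 with
    done | ⟨z1, z4, hz1m, hz1M, hTC1, hz1c, hz1r, hz4M, hz4m, hTC4, hz4r, hz4c⟩
  · exact done
  have tNN := ruleNN h1 hTC1 hz1c hz1r
  have tSN := ruleSN h1 h4 hz1m hz1M hTC1 hz1c hz1r hz4M hz4m hTC4 hz4r hz4c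
  have gp : Ge2 R p p := ge2_refl h1 p
  have hlow1 : R (b,q) (a,p) := htr _ _ _ hP1 (hσp₁ a)
  rcases tot (c,p) (d,q) with hW | hW
  · exact tSN a b c d p q r s haa hab' hba hbb' hca hcb' hda hdb' gp hσq hσr hσs
      hlow1 hP2 hW
  obtain ⟨D, hDa, hDb, hD1, hD2⟩ := anchor_row h1 h8 hab hda hcb' (hσq d) hW h2
  obtain ⟨B₀, hB₀a, hB₀b, hB₀1, hB₀2⟩ := anchor_row h1 h8 hab hba hab' (hσq b) hlow1 h2
  have hBfull : ∃ B, Ge1 R a₀ B ∧ Ge1 R B b₀ ∧ R (B,p) (b,q) ∧ R (b,q) (B,p) ∧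
      ∃ t, R (B,t) (b,s) := by
    by_cases hup : ∃ t, R (B₀,t) (b,s)
    · exact ⟨B₀, hB₀a, hB₀b, hB₀1, hB₀2, hup⟩
    · push_neg at hup
      have h5 : R (b,s) (B₀,r) := (tot _ _).resolve_left (hup r)
      have hsp : SP R (a,r) (B₀,r) :=
        ⟨htr _ _ _ hP2 h5, fun hcon => hup r (htr _ _ _ hcon hP2)⟩
      have haB : Ge1 R a B₀ := h2.1 a B₀ r hsp
      exact ⟨a, haa, hab', htr _ _ _ (haB p) hB₀1, hlow1, r, hP2⟩
  obtain ⟨B, hBa, hBb, hB1, hB2, t₀, ht₀⟩ := hBfull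
  have hlows : R (b,s) (B,p) := htr _ _ _ (hσs b) (htr _ _ _ (hσq b) hB2)
  obtain ⟨s₀, hs1, hs2⟩ := h8.1 B t₀ p (b,s) ht₀ hlows
  have hsfull : ∃ sP, Ge2 R sP p ∧ R (B,sP) (b,s) ∧ R (b,s) (B,sP) := by
    rcases ge2_total h1 h2 s₀ p with hσ | hσ
    · exact ⟨s₀, hσ, hs1, hs2⟩
    · exact ⟨p, gp, htr _ _ _ (hσ B) hs1, hlows⟩
  obtain ⟨sP, hsPn, hs1', hs2'⟩ := hsfull
  have main : R (c,r) (D,sP) :=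
    tNN a B c D p₁ p r sP haa hBa hca hDa hσp₁ gp hσr hsPn
      (htr _ _ _ hB1 hP1) (htr _ _ _ hP2 hs2') (htr _ _ _ hP3 hD2)
  have ret : R (D,sP) (d,s) :=
    tSN B b D d p q sP s hBa hBb hba hbb' hDa hDb hda hdb' gp hσq hsPn hσs
      hB2 hs1' hD1
  exact htr _ _ _ main ret

/-- The mixed class: bridge pair `(p₁,q)` mixed with `p₁` below, `q` above, and `r,s` above. -/
lemma classSNNN (h1 : A1 R) (h2 : A2 R) (h4 : A4 R) (h8 : A8 R)
    {a₀ b₀ : X₁} {p : X₂} (hab : Ge1 R a₀ b₀)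
    (ha : (a₀, p) ∈ Theta R) (hb : (b₀, p) ∈ Theta R)
    {a b c d : X₁} {p₁ q r s : X₂}
    (haa : Ge1 R a₀ a) (hab' : Ge1 R a b₀) (hba : Ge1 R a₀ b) (hbb' : Ge1 R b b₀)
    (hca : Ge1 R a₀ c) (hcb' : Ge1 R c b₀) (hda : Ge1 R a₀ d) (hdb' : Ge1 R d b₀)
    (hσp₁ : Ge2 R p p₁) (hσq : Ge2 R q p) (hσr : Ge2 R r p) (hσs : Ge2 R s p)
    (hP1 : R (b,q) (a,p₁)) (hP2 : R (a,r) (b,s)) (hP3 : R (c,p₁) (d,q)) :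
    R (c,r) (d,s) := by
  have tot := h1.1
  have htr := h1.2
  rcases slabs_or_conc h1 ha hb haa hab' hba hbb' hca hcb' hda hdb' hP1 hP2 hP3 with
    done | ⟨z1, z4, hz1m, hz1M, hTC1, hz1c, hz1r, hz4M, hz4m, hTC4, hz4r, hz4c⟩
  · exact done
  have tNN := ruleNN h1 hTC1 hz1c hz1r
  have tSN := ruleSN h1 h4 hz1m hz1M hTC1 hz1c hz1r hz4M hz4m hTC4 hz4r hz4c
  have gp : Ge2 R p p := ge2_refl h1 p
  by_cases hy : R (b,p) (a,p₁)
  · exact tSN a b c d p₁ p r s haa hab' hba hbb' hca hcb' hda hdb' hσp₁ gp hσr hσs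
      hy hP2 (htr _ _ _ hP3 (hσq d))
  have hαlow : R (a,p₁) (b,p) := (tot _ _).resolve_left hy
  obtain ⟨α, hαa, hαb, tα1, tα2⟩ := anchor_row h1 h8 hab haa hbb' (hσp₁ a) hαlow h2
  obtain ⟨γ₀, hγ₀a, hγ₀b, tγ₀1, tγ₀2⟩ := anchor_row h1 h8 hab hca hdb' (hσp₁ c)
      (htr _ _ _ hP3 (hσq d)) h2
  have hγfull : ∃ γ, Ge1 R a₀ γ ∧ Ge1 R γ b₀ ∧ R (γ,p) (c,p₁) ∧ R (c,p₁) (γ,p) ∧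
      Ge1 R γ d := by
    rcases ge1_total h1 h2 γ₀ d with hg | hg
    · exact ⟨γ₀, hγ₀a, hγ₀b, tγ₀1, tγ₀2, hg⟩
    · exact ⟨d, hda, hdb', htr _ _ _ (hg p) tγ₀1, htr _ _ _ hP3 (hσq d), ge1_refl h1 d⟩
  obtain ⟨γ, hγa, hγb, tγ1, tγ2, hγd⟩ := hγfull
  by_cases hup : ∃ t, R (α,t) (a,r)
  · obtain ⟨t₀, ht₀⟩ := hup
    have hlowr : R (a,r) (α,p) := htr _ _ _ (hσr a) (htr _ _ _ (hσp₁ a) tα2)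
    obtain ⟨r₀, hr1, hr2⟩ := h8.1 α t₀ p (a,r) ht₀ hlowr
    have hrfull : ∃ rP, Ge2 R rP p ∧ R (α,rP) (a,r) ∧ R (a,r) (α,rP) := by
      rcases ge2_total h1 h2 r₀ p with hσ | hσ
      · exact ⟨r₀, hσ, hr1, hr2⟩
      · exact ⟨p, gp, htr _ _ _ (hσ α) hr1, hlowr⟩
    obtain ⟨rP, hrPn, hrP1, hrP2⟩ := hrfull
    have k1 : R (c,r) (γ,rP) :=
      tSN a α c γ p₁ p r rP haa hab' hαa hαb hca hcb' hγa hγb hσp₁ gp hσr hrPn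
        tα1 hrP2 tγ2
    have k2 : R (γ,rP) (d,s) :=
      tNN α b γ d p q rP s hαa hba hγa hda gp hσq hrPn hσs
        (htr _ _ _ hP1 tα2) (htr _ _ _ hrP1 hP2) (htr _ _ _ tγ1 hP3)
    exact htr _ _ _ k1 k2
  · push_neg at hup
    have hFs : R (a,r) (α,s) := (tot _ _).resolve_left (hup s)
    have k1 : R (c,r) (γ,s) :=
      tSN a α c γ p₁ p r s haa hab' hαa hαb hca hcb' hγa hγb hσp₁ gp hσr hσs
        tα1 hFs tγ2
    exact htr _ _ _ k1 (hγd s)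

/-- The mixed class: bridge pair `(p₁,q)` above `p`, `r` below `p`, `s` above `p`. -/
lemma classNNSN (h1 : A1 R) (h2 : A2 R) (h4 : A4 R) (h8 : A8 R)
    {a₀ b₀ : X₁} {p : X₂} (hab : Ge1 R a₀ b₀)
    (ha : (a₀, p) ∈ Theta R) (hb : (b₀, p) ∈ Theta R)
    {a b c d : X₁} {p₁ q r s : X₂}
    (haa : Ge1 R a₀ a) (hab' : Ge1 R a b₀) (hba : Ge1 R a₀ b) (hbb' : Ge1 R b b₀)
    (hca : Ge1 R a₀ c) (hcb' : Ge1 R c b₀) (hda : Ge1 R a₀ d) (hdb' : Ge1 R d b₀)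
    (hσp₁ : Ge2 R p₁ p) (hσq : Ge2 R q p) (hσr : Ge2 R p r) (hσs : Ge2 R s p)
    (hP1 : R (b,q) (a,p₁)) (hP2 : R (a,r) (b,s)) (hP3 : R (c,p₁) (d,q)) :
    R (c,r) (d,s) := by
  have tot := h1.1
  have htr := h1.2
  have rfl' : ∀ x : X₁ × X₂, R x x := fun x => (tot x x).elim id id
  rcases slabs_or_conc h1 ha hb haa hab' hba hbb' hca hcb' hda hdb' hP1 hP2 hP3 with
    done | ⟨z1, z4, hz1m, hz1M, hTC1, hz1c, hz1r, hz4M, hz4m, hTC4, hz4r, hz4c⟩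
  · exact done
  have tNN := ruleNN h1 hTC1 hz1c hz1r
  have tNS := ruleNS h1 h4 hz1m hz1M hTC1 hz1c hz1r hz4M hz4m hTC4 hz4r hz4c
  have tSN := ruleSN h1 h4 hz1m hz1M hTC1 hz1c hz1r hz4M hz4m hTC4 hz4r hz4c
  have gp : Ge2 R p p := ge2_refl h1 p
  -- basic consequences of P2 and the column sides
  have harbp : R (a,r) (b,p) := htr _ _ _ hP2 (hσs b)
  have hapbs : R (a,p) (b,s) := htr _ _ _ (hσr a) hP2
  -- the conclusion weakened at `p` on each side
  have hcrdp : R (c,r) (d,p) :=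
    tNS a b c d p₁ q r p haa hab' hba hbb' hca hcb' hda hdb' hσp₁ hσq hσr gp
      hP1 harbp hP3
  have hcpds : R (c,p) (d,s) :=
    tNN a b c d p₁ q p s haa hba hca hda hσp₁ hσq gp hσs hP1 hapbs hP3
  -- anchors at column p
  obtain ⟨E, hEa, hEb, tE1, tE2⟩ := anchor_row h1 h8 hab haa hbb' (hσr a) harbp h2
  obtain ⟨E₂', hE₂a', hE₂b', tE₂1', tE₂2'⟩ := anchor_row h1 h8 hab haa hbb' hapbs (hσs b) h2
  obtain ⟨H, hHa, hHb, tH1, tH2⟩ := anchor_row h1 h8 hab hca hdb' (hσr c) hcrdp h2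
  obtain ⟨H', hH'a, hH'b, tH'1, tH'2⟩ := anchor_row h1 h8 hab hca hdb' hcpds (hσs d) h2
  -- wlog E₂ is at least b
  have hE₂full : ∃ E₂, Ge1 R a₀ E₂ ∧ Ge1 R E₂ b₀ ∧ R (E₂,p) (b,s) ∧ R (b,s) (E₂,p) ∧
      Ge1 R E₂ b := by
    rcases ge1_total h1 h2 E₂' b with hg | hg
    · exact ⟨E₂', hE₂a', hE₂b', tE₂1', tE₂2', hg⟩
    · refine ⟨b, hba, hbb', ?_, hσs b, ge1_refl h1 b⟩
      exact htr _ _ _ (hg p) tE₂1'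
  obtain ⟨E₂, hE₂a, hE₂b, tE₂1, tE₂2, hE₂b1⟩ := hE₂full
  -- construct v₁ on row E with value (a,p₁); if impossible, close directly
  have hlowv₁ : R (a,p₁) (E,p) := htr _ _ _ (ge2_trans h1 hσp₁ hσr a) tE2
  by_cases hupv₁ : ∃ t, R (E,t) (a,p₁)
  · obtain ⟨t₀, ht₀⟩ := hupv₁
    obtain ⟨v₀, hv01, hv02⟩ := h8.1 E t₀ p (a,p₁) ht₀ hlowv₁
    have hv₁full : ∃ v₁, Ge2 R v₁ p ∧ R (E,v₁) (a,p₁) ∧ R (a,p₁) (E,v₁) := by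
      rcases ge2_total h1 h2 v₀ p with hσ | hσ
      · exact ⟨v₀, hσ, hv01, hv02⟩
      · exact ⟨p, gp, htr _ _ _ (hσ E) hv01, hlowv₁⟩
    obtain ⟨v₁, hv₁n, tv₁1, tv₁2⟩ := hv₁full
    -- construct v₂ on row E₂ with value (b,q); the failing side degenerates
    rcases tot (b,q) (E₂,p) with hlowv₂ | hcase
    · obtain ⟨w₀, hw01, hw02⟩ := h8.1 E₂ q p (b,q) (hE₂b1 q) hlowv₂
      have hv₂full : ∃ v₂, Ge2 R v₂ p ∧ R (E₂,v₂) (b,q) ∧ R (b,q) (E₂,v₂) := by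
        rcases ge2_total h1 h2 w₀ p with hσ | hσ
        · exact ⟨w₀, hσ, hw01, hw02⟩
        · exact ⟨p, gp, htr _ _ _ (hσ E₂) hw01, hlowv₂⟩
      obtain ⟨v₂, hv₂n, tv₂1, tv₂2⟩ := hv₂full
      -- main transfer between the four anchors
      have prem1 : R (E₂,v₂) (E,v₁) := htr _ _ _ tv₂1 (htr _ _ _ hP1 tv₁2)
      have prem2 : R (E,p) (E₂,p) := htr _ _ _ tE1 (htr _ _ _ hP2 tE₂2)
      have k1 : R (H,v₁) (c,p₁) :=
        tSN E a H c p r v₁ p₁ hEa hEb haa hab' hHa hHb hca hcb' gp hσr hv₁n hσp₁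
          tE2 tv₁1 tH1
      have k3 : R (d,q) (H',v₂) :=
        tNN b E₂ d H' s p q v₂ hba hE₂a hda hH'a hσs gp hσq hv₂n
          tE₂1 tv₂2 tH'2
      have prem3 : R (H,v₁) (H',v₂) := htr _ _ _ k1 (htr _ _ _ hP3 k3)
      have main : R (H,p) (H',p) :=
        tNN E E₂ H H' v₁ v₂ p p hEa hE₂a hHa hH'a hv₁n hv₂n gp gp prem1 prem2 prem3
      exact htr _ _ _ tH2 (htr _ _ _ main tH'1)
    · -- here (b,s) dominates (b,q); everything on row a collapses to column p
      have hbsbq : R (b,s) (b,q) := htr _ _ _ tE₂2 hcase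
      have harap : R (a,r) (a,p) :=
        htr _ _ _ hP2 (htr _ _ _ hbsbq (htr _ _ _ hP1 (hσp₁ a)))
      have hapbs2 : R (b,s) (a,p) := htr _ _ _ hbsbq (htr _ _ _ hP1 (hσp₁ a))
      have kk2 : R (c,p) (d,s) := hcpds
      have kcr : R (c,r) (c,p) :=
        tNS a a c c p p r p haa hab' haa hab' hca hcb' hca hcb' gp gp hσr gp
          (rfl' _) harap (rfl' _)
      exact htr _ _ _ kcr kk2
  · -- row E cannot reach (a,p₁): then row b collapses at columns p and s
    push_neg at hupv₁
    have hq : R (a,p₁) (E,q) := (tot _ _).resolve_left (hupv₁ q)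
    have hsp : SP R (b,q) (E,q) :=
      ⟨htr _ _ _ hP1 hq, fun hcon => (hupv₁ q) (htr _ _ _ hcon hP1)⟩
    have hbE : Ge1 R b E := h2.1 b E q hsp
    have hbpbs : R (b,p) (b,s) := htr _ _ _ (hbE p) (htr _ _ _ tE1 hP2)
    have kk4 : R (d,p) (d,s) :=
      tNN b b d d p p p s hba hba hda hda gp gp gp hσs (rfl' _) hbpbs (rfl' _)
    exact htr _ _ _ hcrdp kk4

/-- Doubly mixed classes with `p₁` above `p` and `q` below `p`. -/
lemma classNSmixed (h1 : A1 R) (h2 : A2 R) (h4 : A4 R) (h8 : A8 R)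
    {a₀ b₀ : X₁} {p : X₂} (hab : Ge1 R a₀ b₀)
    (ha : (a₀, p) ∈ Theta R) (hb : (b₀, p) ∈ Theta R)
    {a b c d : X₁} {p₁ q r s : X₂}
    (haa : Ge1 R a₀ a) (hab' : Ge1 R a b₀) (hba : Ge1 R a₀ b) (hbb' : Ge1 R b b₀)
    (hca : Ge1 R a₀ c) (hcb' : Ge1 R c b₀) (hda : Ge1 R a₀ d) (hdb' : Ge1 R d b₀)
    (hσp₁ : Ge2 R p₁ p) (hσq : Ge2 R p q)
    (hrs : (Ge2 R r p ∧ Ge2 R p s) ∨ (Ge2 R p r ∧ Ge2 R s p))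
    (hP1 : R (b,q) (a,p₁)) (hP2 : R (a,r) (b,s)) (hP3 : R (c,p₁) (d,q)) :
    R (c,r) (d,s) := by
  have tot := h1.1
  have htr := h1.2
  have gp : Ge2 R p p := ge2_refl h1 p
  have hlow1 : R (b,q) (a,p) := htr _ _ _ hP1 (hσp₁ a)
  -- first case: the bridge can be replaced by the pure pair (p,q)
  rcases tot (c,p) (d,q) with hW | hW
  · rcases hrs with ⟨hσr, hσs⟩ | ⟨hσr, hσs⟩
    · exact classNNNS (R := flipR R) (a₀ := b₀) (b₀ := a₀) (p := p)
        (a1_flip h1) (a2_flip h2) (a4_flip h4) (a8_flip h8) hab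
        (theta_flip hb) (theta_flip ha)
        (a := b) (b := a) (c := d) (d := c) (p₁ := q) (q := p) (r := s) (s := r)
        hbb' hba hab' haa hdb' hda hcb' hca
        hσq gp hσs hσr hlow1 hP2 hW
    · exact classNNSN (R := flipR R) (a₀ := b₀) (b₀ := a₀) (p := p)
        (a1_flip h1) (a2_flip h2) (a4_flip h4) (a8_flip h8) hab
        (theta_flip hb) (theta_flip ha)
        (a := b) (b := a) (c := d) (d := c) (p₁ := q) (q := p) (r := s) (s := r)
        hbb' hba hab' haa hdb' hda hcb' hca
        hσq gp hσs hσr hlow1 hP2 hW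
  -- second case: anchor rows b and d at column p
  obtain ⟨D₀, hD₀a, hD₀b, tD₀1, tD₀2⟩ := anchor_row h1 h8 hab hda hcb' (hσq d) hW h2
  have hDfull : ∃ D, Ge1 R a₀ D ∧ Ge1 R D b₀ ∧ R (D,p) (d,q) ∧ R (d,q) (D,p) ∧
      Ge1 R d D := by
    rcases ge1_total h1 h2 d D₀ with hg | hg
    · exact ⟨D₀, hD₀a, hD₀b, tD₀1, tD₀2, hg⟩
    · exact ⟨d, hda, hdb', hσq d, htr _ _ _ tD₀2 (hg p), ge1_refl h1 d⟩
  obtain ⟨D, hDa, hDb, tD1, tD2, hdD⟩ := hDfull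
  obtain ⟨B₀, hB₀a, hB₀b, tB₀1, tB₀2⟩ := anchor_row h1 h8 hab hba hab' (hσq b) hlow1 h2
  have hBfull : ∃ B, Ge1 R a₀ B ∧ Ge1 R B b₀ ∧ R (B,p) (b,q) ∧ R (b,q) (B,p) ∧
      Ge1 R b B ∧ ∃ t, R (B,t) (b,s) := by
    by_cases hup : ∃ t, R (B₀,t) (b,s)
    · rcases ge1_total h1 h2 b B₀ with hg | hg
      · exact ⟨B₀, hB₀a, hB₀b, tB₀1, tB₀2, hg, hup⟩
      · refine ⟨b, hba, hbb', hσq b, htr _ _ _ tB₀2 (hg p), ge1_refl h1 b,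
          s, (tot _ _).elim id id⟩
    · push_neg at hup
      have h5 : R (b,s) (B₀,r) := (tot _ _).resolve_left (hup r)
      have hsp : SP R (a,r) (B₀,r) :=
        ⟨htr _ _ _ hP2 h5, fun hcon => hup r (htr _ _ _ hcon hP2)⟩
      have haB : Ge1 R a B₀ := h2.1 a B₀ r hsp
      have t1 : R (a,p) (b,q) := htr _ _ _ (haB p) tB₀1
      rcases ge1_total h1 h2 b a with hg | hg
      · exact ⟨a, haa, hab', t1, hlow1, hg, r, hP2⟩
      · exact ⟨b, hba, hbb', hσq b, htr _ _ _ hlow1 (hg p), ge1_refl h1 b,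
          s, (tot _ _).elim id id⟩
  obtain ⟨B, hBa, hBb, tB1, tB2, hbB, t₀, ht₀⟩ := hBfull
  have hP1' : R (B,p) (a,p₁) := htr _ _ _ tB1 hP1
  have hP3' : R (c,p₁) (D,p) := htr _ _ _ hP3 tD2
  -- lift s to row B
  obtain ⟨sB, tsB1, tsB2⟩ := h8.1 B t₀ s (b,s) ht₀ (hbB s)
  rcases hrs with ⟨hσr, hσs⟩ | ⟨hσr, hσs⟩
  · -- r above p, s below p
    rcases ge2_total h1 h2 sB p with hsBn | hsBs
    · -- sB above p : row b collapses between q and s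
      have hbsbq : R (b,s) (b,q) := htr _ _ _ tsB2 (htr _ _ _ (hsBn B) tB1)
      rcases slabs_or_conc h1 ha hb haa hab' hba hbb' hca hcb' hda hdb' hP1 hP2 hP3 with
        done | ⟨z1, z4, hz1m, hz1M, hTC1, hz1c, hz1r, hz4M, hz4m, hTC4, hz4r, hz4c⟩
      · exact done
      have tNN := ruleNN h1 hTC1 hz1c hz1r
      have concl : R (c,r) (D,sB) :=
        tNN a B c D p₁ p r sB haa hBa hca hDa hσp₁ gp hσr hsBn hP1'
          (htr _ _ _ hP2 tsB2) hP3'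
      have ret : R (D,sB) (d,s) :=
        classNNNS (R := flipR R) (a₀ := b₀) (b₀ := a₀) (p := p)
          (a1_flip h1) (a2_flip h2) (a4_flip h4) (a8_flip h8) hab
          (theta_flip hb) (theta_flip ha)
          (a := b) (b := B) (c := d) (d := D) (p₁ := q) (q := p) (r := s) (s := sB)
          hbb' hba hBb hBa hdb' hda hDb hDa
          hσq gp hσs hsBn tB2 tsB1 tD1
      exact htr _ _ _ concl ret
    · -- sB below p : transfer through the anchors
      have concl : R (c,r) (D,sB) :=
        classNNNS h1 h2 h4 h8 hab ha hb haa hab' hBa hBb hca hcb' hDa hDb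
          hσp₁ gp hσr hsBs hP1' (htr _ _ _ hP2 tsB2) hP3'
      -- return: transfer the tie (B,sB) ∼ (b,s) to row D/d
      rcases slabs_or_conc h1 ha hb haa hab' hba hbb' hca hcb' hda hdb' hP1 hP2 hP3 with
        done | ⟨z1, z4, hz1m, hz1M, hTC1, hz1c, hz1r, hz4M, hz4m, hTC4, hz4r, hz4c⟩
      · exact done
      have tSS := ruleSS h1 hTC4 hz4r hz4c
      have ret : R (D,sB) (d,s) :=
        tSS B b D d p q sB s hBb hbb' hDb hdb' gp hσq hsBs hσs tB2 tsB1 tD1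
      exact htr _ _ _ concl ret
  · -- r below p, s above p : here sB is above p (up-shift)
    rcases ge2_total h1 h2 sB p with hsBn | hsBs
    · have concl : R (c,r) (D,sB) :=
        classNNSN h1 h2 h4 h8 hab ha hb haa hab' hBa hBb hca hcb' hDa hDb
          hσp₁ gp hσr hsBn hP1' (htr _ _ _ hP2 tsB2) hP3'
      rcases slabs_or_conc h1 ha hb haa hab' hba hbb' hca hcb' hda hdb' hP1 hP2 hP3 with
        done | ⟨z1, z4, hz1m, hz1M, hTC1, hz1c, hz1r, hz4M, hz4m, hTC4, hz4r, hz4c⟩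
      · exact done
      have tSN := ruleSN h1 h4 hz1m hz1M hTC1 hz1c hz1r hz4M hz4m hTC4 hz4r hz4c
      have ret : R (D,sB) (d,s) :=
        tSN B b D d p q sB s hBa hBb hba hbb' hDa hDb hda hdb' gp hσq hsBn hσs
          tB2 tsB1 tD1
      exact htr _ _ _ concl ret
    · -- sB below p : row b collapses between p, q and s
      have hbqbs : R (b,q) (b,s) :=
        htr _ _ _ (htr _ _ _ tB2 (hsBs B)) tsB1
      have hbpbs : R (b,p) (b,s) := htr _ _ _ (hσq b) hbqbs
      rcases slabs_or_conc h1 ha hb haa hab' hba hbb' hca hcb' hda hdb' hP1 hP2 hP3 with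
        done | ⟨z1, z4, hz1m, hz1M, hTC1, hz1c, hz1r, hz4M, hz4m, hTC4, hz4r, hz4c⟩
      · exact done
      have tNN := ruleNN h1 hTC1 hz1c hz1r
      have rfl' : ∀ x : X₁ × X₂, R x x := fun x => (tot x x).elim id id
      have kk4 : R (d,p) (d,s) :=
        tNN b b d d p p p s hba hba hda hda gp gp gp hσs (rfl' _) hbpbs (rfl' _)
      have hbsbq' : R (b,s) (b,q) := htr _ _ _ (hσs b) (hσq b)
      have concl : R (c,r) (D,p) :=
        classNNSN h1 h2 h4 h8 hab ha hb haa hab' hBa hBb hca hcb' hDa hDb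
          hσp₁ gp hσr gp hP1' (htr _ _ _ hP2 (htr _ _ _ hbsbq' tB2)) hP3'
      have tSS := ruleSS h1 hTC4 hz4r hz4c
      have hdqdp : R (d,q) (d,p) :=
        tSS b b d d p p q p hbb' hbb' hdb' hdb' gp gp hσq gp (rfl' _)
          (htr _ _ _ hbqbs (hσs b)) (rfl' _)
      exact htr _ _ _ concl (htr _ _ _ tD1 (htr _ _ _ hdqdp kk4))

/-- Doubly mixed classes with `p₁` below `p` and `q` above `p`. -/
lemma classSNmixed (h1 : A1 R) (h2 : A2 R) (h4 : A4 R) (h8 : A8 R)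
    {a₀ b₀ : X₁} {p : X₂} (hab : Ge1 R a₀ b₀)
    (ha : (a₀, p) ∈ Theta R) (hb : (b₀, p) ∈ Theta R)
    {a b c d : X₁} {p₁ q r s : X₂}
    (haa : Ge1 R a₀ a) (hab' : Ge1 R a b₀) (hba : Ge1 R a₀ b) (hbb' : Ge1 R b b₀)
    (hca : Ge1 R a₀ c) (hcb' : Ge1 R c b₀) (hda : Ge1 R a₀ d) (hdb' : Ge1 R d b₀)
    (hσp₁ : Ge2 R p p₁) (hσq : Ge2 R q p)
    (hrs : (Ge2 R r p ∧ Ge2 R p s) ∨ (Ge2 R p r ∧ Ge2 R s p))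
    (hP1 : R (b,q) (a,p₁)) (hP2 : R (a,r) (b,s)) (hP3 : R (c,p₁) (d,q)) :
    R (c,r) (d,s) := by
  have tot := h1.1
  have htr := h1.2
  have gp : Ge2 R p p := ge2_refl h1 p
  by_cases hX : R (b,p) (a,p₁)
  · -- bridge (p₁,p), conclusion row d anchored upwards
    obtain ⟨D₀, hD₀a, hD₀b, tD₀1, tD₀2⟩ :=
      anchor_row h1 h8 hab hca hdb' (htr _ _ _ (hσp₁ c) hP3) (hσq d) h2
    have hDfull : ∃ D, Ge1 R a₀ D ∧ Ge1 R D b₀ ∧ R (D,p) (d,q) ∧ R (d,q) (D,p) ∧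
        Ge1 R D d := by
      rcases ge1_total h1 h2 D₀ d with hg | hg
      · exact ⟨D₀, hD₀a, hD₀b, tD₀1, tD₀2, hg⟩
      · exact ⟨d, hda, hdb', htr _ _ _ (hg p) tD₀1, hσq d, ge1_refl h1 d⟩
    obtain ⟨D, hDa, hDb, tD1, tD2, hDd⟩ := hDfull
    have hP3x : R (c,p₁) (D,p) := htr _ _ _ hP3 tD2
    rcases hrs with ⟨hσr, hσs⟩ | ⟨hσr, hσs⟩
    · have concl : R (c,r) (D,s) :=
        classNNNS (R := flipR R) (a₀ := b₀) (b₀ := a₀) (p := p)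
          (a1_flip h1) (a2_flip h2) (a4_flip h4) (a8_flip h8) hab
          (theta_flip hb) (theta_flip ha)
          (a := b) (b := a) (c := D) (d := c) (p₁ := p) (q := p₁) (r := s) (s := r)
          hbb' hba hab' haa hDb hDa hcb' hca
          gp hσp₁ hσs hσr hX hP2 hP3x
      exact htr _ _ _ concl (hDd s)
    · have concl : R (c,r) (D,s) :=
        classNNSN (R := flipR R) (a₀ := b₀) (b₀ := a₀) (p := p)
          (a1_flip h1) (a2_flip h2) (a4_flip h4) (a8_flip h8) hab
          (theta_flip hb) (theta_flip ha)
          (a := b) (b := a) (c := D) (d := c) (p₁ := p) (q := p₁) (r := s) (s := r)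
          hbb' hba hab' haa hDb hDa hcb' hca
          gp hσp₁ hσs hσr hX hP2 hP3x
      exact htr _ _ _ concl (hDd s)
  · by_cases hZ : R (b,q) (a,p)
    · -- bridge (p,q), conclusion row c anchored downwards
      obtain ⟨C₀, hC₀a, hC₀b, tC₀1, tC₀2⟩ :=
        anchor_row h1 h8 hab hca hdb' (hσp₁ c) (htr _ _ _ hP3 (hσq d)) h2
      have hCfull : ∃ C₁, Ge1 R a₀ C₁ ∧ Ge1 R C₁ b₀ ∧ R (C₁,p) (c,p₁) ∧
          R (c,p₁) (C₁,p) ∧ Ge1 R c C₁ := by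
        rcases ge1_total h1 h2 c C₀ with hg | hg
        · exact ⟨C₀, hC₀a, hC₀b, tC₀1, tC₀2, hg⟩
        · exact ⟨c, hca, hcb', hσp₁ c, htr _ _ _ tC₀2 (hg p), ge1_refl h1 c⟩
      obtain ⟨C₁, hCa, hCb, tC1, tC2, hcC⟩ := hCfull
      have hP3z : R (C₁,p) (d,q) := htr _ _ _ tC1 hP3
      rcases hrs with ⟨hσr, hσs⟩ | ⟨hσr, hσs⟩
      · have concl : R (C₁,r) (d,s) :=
          classNNNS h1 h2 h4 h8 hab ha hb haa hab' hba hbb' hCa hCb hda hdb'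
            gp hσq hσr hσs hZ hP2 hP3z
        exact htr _ _ _ (hcC r) concl
      · have concl : R (C₁,r) (d,s) :=
          classNNSN h1 h2 h4 h8 hab ha hb haa hab' hba hbb' hCa hCb hda hdb'
            gp hσq hσr hσs hZ hP2 hP3z
        exact htr _ _ _ (hcC r) concl
    · -- neither comparison holds: anchor rows b and d upwards
      have hax : R (a,p₁) (b,p) := (h1.1 _ _).resolve_left hX
      have haz : R (a,p) (b,q) := (h1.1 _ _).resolve_left hZ
      rcases slabs_or_conc h1 ha hb haa hab' hba hbb' hca hcb' hda hdb' hP1 hP2 hP3 with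
        done | ⟨z1, z4, hz1m, hz1M, hTC1, hz1c, hz1r, hz4M, hz4m, hTC4, hz4r, hz4c⟩
      · exact done
      have tNN := ruleNN h1 hTC1 hz1c hz1r
      have tSS := ruleSS h1 hTC4 hz4r hz4c
      have tNS := ruleNS h1 h4 hz1m hz1M hTC1 hz1c hz1r hz4M hz4m hTC4 hz4r hz4c
      have tSN := ruleSN h1 h4 hz1m hz1M hTC1 hz1c hz1r hz4M hz4m hTC4 hz4r hz4c
      obtain ⟨B₀, hB₀a, hB₀b, tB₀1, tB₀2⟩ := anchor_row h1 h8 hab haa hbb' haz (hσq b) h2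
      have hBfull : ∃ B, Ge1 R a₀ B ∧ Ge1 R B b₀ ∧ R (B,p) (b,q) ∧ R (b,q) (B,p) ∧
          Ge1 R B b := by
        rcases ge1_total h1 h2 B₀ b with hg | hg
        · exact ⟨B₀, hB₀a, hB₀b, tB₀1, tB₀2, hg⟩
        · exact ⟨b, hba, hbb', htr _ _ _ (hg p) tB₀1, hσq b, ge1_refl h1 b⟩
      obtain ⟨B, hBa, hBb, tB1, tB2, hBb1⟩ := hBfull
      obtain ⟨D₀, hD₀a, hD₀b, tD₀1, tD₀2⟩ :=
        anchor_row h1 h8 hab hca hdb' (htr _ _ _ (hσp₁ c) hP3) (hσq d) h2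
      have hDfull : ∃ D, Ge1 R a₀ D ∧ Ge1 R D b₀ ∧ R (D,p) (d,q) ∧ R (d,q) (D,p) ∧
          Ge1 R D d := by
        rcases ge1_total h1 h2 D₀ d with hg | hg
        · exact ⟨D₀, hD₀a, hD₀b, tD₀1, tD₀2, hg⟩
        · exact ⟨d, hda, hdb', htr _ _ _ (hg p) tD₀1, hσq d, ge1_refl h1 d⟩
      obtain ⟨D, hDa, hDb, tD1, tD2, hDd⟩ := hDfull
      have hP1' : R (B,p) (a,p₁) := htr _ _ _ tB1 hP1
      have hP3' : R (c,p₁) (D,p) := htr _ _ _ hP3 tD2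
      by_cases hlo : ∃ t, R (b,s) (B,t)
      · obtain ⟨t₁, ht₁⟩ := hlo
        obtain ⟨sB, tsB1, tsB2⟩ := h8.1 B s t₁ (b,s) (hBb1 s) ht₁
        have hP2' : R (a,r) (B,sB) := htr _ _ _ hP2 tsB2
        rcases hrs with ⟨hσr, hσs⟩ | ⟨hσr, hσs⟩
        · rcases ge2_total h1 h2 sB p with hsBn | hsBs
          · have concl : R (c,r) (D,sB) :=
              tSN a B c D p₁ p r sB haa hab' hBa hBb hca hcb' hDa hDb hσp₁ gp hσr hsBn
                hP1' hP2' hP3'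
            have ret : R (D,sB) (d,s) :=
              classNNNS h1 h2 h4 h8 hab ha hb hBa hBb hba hbb' hDa hDb hda hdb'
                gp hσq hsBn hσs tB2 tsB1 tD1
            exact htr _ _ _ concl ret
          · have concl : R (c,r) (D,sB) :=
              classNNNS (R := flipR R) (a₀ := b₀) (b₀ := a₀) (p := p)
                (a1_flip h1) (a2_flip h2) (a4_flip h4) (a8_flip h8) hab
                (theta_flip hb) (theta_flip ha)
                (a := B) (b := a) (c := D) (d := c) (p₁ := p) (q := p₁) (r := sB) (s := r)
                hBb hBa hab' haa hDb hDa hcb' hca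
                gp hσp₁ hsBs hσr hP1' hP2' hP3'
            have ret : R (D,sB) (d,s) :=
              tNS B b D d p q sB s hBa hBb hba hbb' hDa hDb hda hdb' gp hσq hsBs hσs
                tB2 tsB1 tD1
            exact htr _ _ _ concl ret
        · rcases ge2_total h1 h2 sB p with hsBn | hsBs
          · have concl : R (c,r) (D,sB) :=
              classNNSN (R := flipR R) (a₀ := b₀) (b₀ := a₀) (p := p)
                (a1_flip h1) (a2_flip h2) (a4_flip h4) (a8_flip h8) hab
                (theta_flip hb) (theta_flip ha)
                (a := B) (b := a) (c := D) (d := c) (p₁ := p) (q := p₁) (r := sB) (s := r)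
                hBb hBa hab' haa hDb hDa hcb' hca
                gp hσp₁ hsBn hσr hP1' hP2' hP3'
            have ret : R (D,sB) (d,s) :=
              tNN B b D d p q sB s hBa hba hDa hda gp hσq hsBn hσs tB2 tsB1 tD1
            exact htr _ _ _ concl ret
          · have concl : R (c,r) (D,sB) :=
              tSS a B c D p₁ p r sB hab' hBb hcb' hDb hσp₁ gp hσr hsBs hP1' hP2' hP3'
            have ret : R (D,sB) (d,s) :=
              classNNSN h1 h2 h4 h8 hab ha hb hBa hBb hba hbb' hDa hDb hda hdb'
                gp hσq hsBs hσs tB2 tsB1 tD1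
            exact htr _ _ _ concl ret
      · -- the value (b,s) lies below row B
        push_neg at hlo
        have hBps : R (B,p) (b,s) := (h1.1 _ _).resolve_left (hlo p)
        have hbqs : R (b,q) (b,s) := htr _ _ _ tB2 hBps
        have hge2qs : Ge2 R q s :=
          h2.2 q s b ⟨hbqs, fun hcon => hlo p (htr _ _ _ hcon tB2)⟩
        have rfl' : ∀ x : X₁ × X₂, R x x := fun x => (h1.1 x x).elim id id
        rcases hrs with ⟨hσr, hσs⟩ | ⟨hσr, hσs⟩
        · have P2p : R (a,r) (B,p) := htr _ _ _ (hσr a) (htr _ _ _ haz tB2)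
          have concl : R (c,r) (D,p) :=
            tSN a B c D p₁ p r p haa hab' hBa hBb hca hcb' hDa hDb hσp₁ gp hσr gp
              hP1' P2p hP3'
          exact htr _ _ _ concl (htr _ _ _ tD1 (hge2qs d))
        · have hdqs : R (d,q) (d,s) :=
            tNN b b d d p p q s hba hba hda hda gp gp hσq hσs (rfl' _) hbqs (rfl' _)
          rcases ge2_total h1 h2 r p₁ with hrp | hpr
          · exact htr _ _ _ (hrp c) (htr _ _ _ hP3 hdqs)
          · -- anchor rows a and c downwards and lift r to row A₁
            obtain ⟨A₁, hA₁a, hA₁b, tA₁1, tA₁2⟩ :=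
              anchor_row h1 h8 hab haa hbb' (hσp₁ a) hax h2
            obtain ⟨C₁, hC₁a, hC₁b, tC₁1, tC₁2⟩ :=
              anchor_row h1 h8 hab hca hdb' (hσp₁ c) (htr _ _ _ hP3 (hσq d)) h2
            by_cases hlo₂ : ∃ t, R (a,r) (A₁,t)
            · obtain ⟨t₂, ht₂⟩ := hlo₂
              obtain ⟨rA₀, u1, u2⟩ := h8.1 A₁ p t₂ (a,r) (htr _ _ _ tA₁1 (hpr a)) ht₂
              have hrAfull : ∃ rA, Ge2 R p rA ∧ R (A₁,rA) (a,r) ∧ R (a,r) (A₁,rA) := by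
                rcases ge2_total h1 h2 rA₀ p with hg | hg
                · exact ⟨p, gp, htr _ _ _ tA₁1 (hpr a), htr _ _ _ u2 (hg A₁)⟩
                · exact ⟨rA₀, hg, u1, u2⟩
              obtain ⟨rA, hrAs, v1, v2⟩ := hrAfull
              have first : R (c,r) (C₁,rA) :=
                tSS a A₁ c C₁ p₁ p r rA hab' hA₁b hcb' hC₁b hσp₁ gp hσr hrAs
                  tA₁1 v2 tC₁2
              have concl : R (C₁,rA) (d,s) :=
                classNNSN h1 h2 h4 h8 hab ha hb hA₁a hA₁b hba hbb' hC₁a hC₁b hda hdb'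
                  gp hσq hrAs hσs (htr _ _ _ hP1 tA₁2) (htr _ _ _ v1 hP2)
                  (htr _ _ _ tC₁1 hP3)
              exact htr _ _ _ first concl
            · push_neg at hlo₂
              have hsp : SP R (A₁,r) (a,r) :=
                ⟨(h1.1 _ _).resolve_left (hlo₂ r), hlo₂ r⟩
              have hA₁a' : Ge1 R A₁ a := h2.1 A₁ a r hsp
              exact absurd (htr _ _ _ hP1 (htr _ _ _ tA₁2 (hA₁a' p))) hZ

end StripAux

/-- If `a₀ ≽₁ b₀` and both `a₀p` and `b₀p` lie in Θ, then triple cancellation holds on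
`X_{a₀b₀} × X₂`. -/
theorem tripleCancel_on_strip {X₁ X₂ : Type*} [Nonempty X₁] [Nonempty X₂]
    (R : X₁ × X₂ → X₁ × X₂ → Prop)
    (h1 : A1 R) (h2 : A2 R) (h3 : A3 R) (h4 : A4 R) (h8 : A8 R)
    (a₀ b₀ : X₁) (hab : Ge1 R a₀ b₀) (p : X₂)
    (ha : (a₀, p) ∈ Theta R) (hb : (b₀, p) ∈ Theta R) :
    TCancel R {x : X₁ × X₂ | Ge1 R a₀ x.1 ∧ Ge1 R x.1 b₀} := by
  have tot := h1.1
  have htr := h1.2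
  have rrefl : ∀ x, R x x := fun x => (tot x x).elim id id
  have ge2refl : ∀ u, Ge2 R u u := fun u x => rrefl _
  have ge2trans : ∀ u v w, Ge2 R u v → Ge2 R v w → Ge2 R u w :=
    fun u v w h h' x => htr _ _ _ (h x) (h' x)
  have ge1trans : ∀ u v w, Ge1 R u v → Ge1 R v w → Ge1 R u w :=
    fun u v w h h' x => htr _ _ _ (h x) (h' x)
  have ge2tot : ∀ u v, Ge2 R u v ∨ Ge2 R v u := by
    intro u v
    by_cases h : Ge2 R u v
    · exact Or.inl h
    · right
      simp only [Ge2, not_forall] at h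
      obtain ⟨x, hx⟩ := h
      exact h2.2 v u x ⟨(tot _ _).resolve_left hx, hx⟩
  intro a b c d p₁ q r s hap hbq har hbs hcp hdq hcr hds hP1 hP2 hP3
  have haa : Ge1 R a₀ a := hap.1
  have hba : Ge1 R a₀ b := hbq.1
  have hca : Ge1 R a₀ c := hcp.1
  have hda : Ge1 R a₀ d := hdq.1
  have hab' : Ge1 R a b₀ := hap.2
  have hbb' : Ge1 R b b₀ := hbq.2
  have hcb' : Ge1 R c b₀ := hcp.2
  have hdb' : Ge1 R d b₀ := hdq.2
  clear hap hbq har hbs hcp hdq hcr hds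
  -- min and max of the four columns
  have min2 : ∀ u v : X₂, ∃ w, Ge2 R u w ∧ Ge2 R v w := fun u v =>
    (ge2tot u v).elim (fun h => ⟨v, h, ge2refl v⟩) (fun h => ⟨u, ge2refl u, h⟩)
  have max2' : ∀ u v : X₂, ∃ w, Ge2 R w u ∧ Ge2 R w v := fun u v =>
    (ge2tot u v).elim (fun h => ⟨u, ge2refl u, h⟩) (fun h => ⟨v, h, ge2refl v⟩)
  obtain ⟨m₁, hm1a, hm1b⟩ := min2 p₁ q
  obtain ⟨m₂, hm2a, hm2b⟩ := min2 r s
  obtain ⟨m, hma, hmb⟩ := min2 m₁ m₂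
  have hgp₁m : Ge2 R p₁ m := ge2trans _ _ _ hm1a hma
  have hgqm : Ge2 R q m := ge2trans _ _ _ hm1b hma
  have hgrm : Ge2 R r m := ge2trans _ _ _ hm2a hmb
  have hgsm : Ge2 R s m := ge2trans _ _ _ hm2b hmb
  obtain ⟨M₁, hM1a, hM1b⟩ := max2' p₁ q
  obtain ⟨M₂, hM2a, hM2b⟩ := max2' r s
  obtain ⟨M, hMa, hMb⟩ := max2' M₁ M₂
  have hgMp₁ : Ge2 R M p₁ := ge2trans _ _ _ hMa hM1a
  have hgMq : Ge2 R M q := ge2trans _ _ _ hMa hM1b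
  have hgMr : Ge2 R M r := ge2trans _ _ _ hMb hM2a
  have hgMs : Ge2 R M s := ge2trans _ _ _ hMb hM2b
  -- helper for degenerate (collapsed rows) cases
  have rowdone : Ge1 R c a → Ge1 R b d → R (c,r) (d,s) := fun h1' h2' =>
    htr _ _ _ (h1' r) (htr _ _ _ hP2 (h2' s))
  -- A3 at the two extreme corners of the instance
  rcases h3 (a₀, m) with hJ1 | hGood1
  · rcases h3 (b₀, M) with hGood2 | hJ2
    · exact hGood2 a b c d p₁ q r s ⟨hab', hgMp₁⟩ ⟨hbb', hgMq⟩ ⟨hab', hgMr⟩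
        ⟨hbb', hgMs⟩ ⟨hcb', hgMp₁⟩ ⟨hdb', hgMq⟩ ⟨hcb', hgMr⟩ ⟨hdb', hgMs⟩ hP1 hP2 hP3
    · -- hard case: use the structure of Θ
      clear hJ1 hJ2 hgp₁m hgqm hgrm hgsm hgMp₁ hgMq hgMr hgMs hma hmb hMa hMb
      clear hm1a hm1b hm2a hm2b hM1a hM1b hM2a hM2b
      have haNW : (a₀, p) ∈ NWreg R := ha.2
      have hbSE : (b₀, p) ∈ SEreg R := hb.1
      rcases haNW with ⟨z1, hz1m, hz1M, hTC1, hz1mem⟩ | ⟨hdeg1, _⟩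
      · rcases hbSE with ⟨z4, hz4m, hz4M, hTC4, hz4mem⟩ | ⟨hdeg4, _⟩
        · -- both slabs available
          have memNW : ∀ (x : X₁) (t : X₂), Ge1 R a₀ x → Ge2 R t p → (x,t) ∈ NWz R z1 :=
            fun x t hx ht => ⟨ge2trans _ _ _ ht hz1mem.1, ge1trans _ _ _ hz1mem.2 hx⟩
          have memSE : ∀ (x : X₁) (t : X₂), Ge1 R x b₀ → Ge2 R p t → (x,t) ∈ SEz R z4 :=
            fun x t hx ht => ⟨ge1trans _ _ _ hx hz4mem.1, ge2trans _ _ _ hz4mem.2 ht⟩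
          have memNWreg : ∀ (x : X₁) (t : X₂), Ge1 R a₀ x → Ge2 R t p → (x,t) ∈ NWreg R :=
            fun x t hx ht => Or.inl ⟨z1, hz1m, hz1M, hTC1, memNW x t hx ht⟩
          have memSEreg : ∀ (x : X₁) (t : X₂), Ge1 R x b₀ → Ge2 R p t → (x,t) ∈ SEreg R :=
            fun x t hx ht => Or.inl ⟨z4, hz4m, hz4M, hTC4, memSE x t hx ht⟩
          -- the four transfer rules for rows in the strip
          have transNN : ∀ (w x y z : X₁) (P Q RR S : X₂),
              Ge1 R a₀ w → Ge1 R a₀ x → Ge1 R a₀ y → Ge1 R a₀ z →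
              Ge2 R P p → Ge2 R Q p → Ge2 R RR p → Ge2 R S p →
              R (x,Q) (w,P) → R (w,RR) (x,S) → R (y,P) (z,Q) → R (y,RR) (z,S) := by
            intro w x y z P Q RR S hw hx hy hz hP hQ hRR hS u1 u2 u3
            exact hTC1 w x y z P Q RR S (memNW w P hw hP) (memNW x Q hx hQ)
              (memNW w RR hw hRR) (memNW x S hx hS) (memNW y P hy hP) (memNW z Q hz hQ)
              (memNW y RR hy hRR) (memNW z S hz hS) u1 u2 u3
          have transSS : ∀ (w x y z : X₁) (P Q RR S : X₂),
              Ge1 R w b₀ → Ge1 R x b₀ → Ge1 R y b₀ → Ge1 R z b₀ →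
              Ge2 R p P → Ge2 R p Q → Ge2 R p RR → Ge2 R p S →
              R (x,Q) (w,P) → R (w,RR) (x,S) → R (y,P) (z,Q) → R (y,RR) (z,S) := by
            intro w x y z P Q RR S hw hx hy hz hP hQ hRR hS u1 u2 u3
            exact hTC4 w x y z P Q RR S (memSE w P hw hP) (memSE x Q hx hQ)
              (memSE w RR hw hRR) (memSE x S hx hS) (memSE y P hy hP) (memSE z Q hz hQ)
              (memSE y RR hy hRR) (memSE z S hz hS) u1 u2 u3
          -- cross rules (mixed premise/conclusion sides) via A4 or its fallback
          have transNS : ∀ (w x y z : X₁) (P Q RR S : X₂),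
              Ge1 R a₀ w → Ge1 R w b₀ → Ge1 R a₀ x → Ge1 R x b₀ →
              Ge1 R a₀ y → Ge1 R y b₀ → Ge1 R a₀ z → Ge1 R z b₀ →
              Ge2 R P p → Ge2 R Q p → Ge2 R p RR → Ge2 R p S →
              R (x,Q) (w,P) → R (w,RR) (x,S) → R (y,P) (z,Q) → R (y,RR) (z,S) := by
            intro w x y z P Q RR S hw1 hw2 hx1 hx2 hy1 hy2 hz1' hz2' hP hQ hRR hS u1 u2 u3
            by_cases hEss : Ess1 R (NWreg R)
            · exact h4 w x y z P Q RR S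
                (Or.inr (Or.inr (Or.inr (Or.inr (Or.inl
                  ⟨⟨memNWreg w P hw1 hP, memNWreg x Q hx1 hQ, memNWreg y P hy1 hP,
                    memNWreg z Q hz1' hQ⟩, hEss,
                   ⟨memSEreg w RR hw2 hRR, memSEreg x S hx2 hS, memSEreg y RR hy2 hRR,
                    memSEreg z S hz2' hS⟩⟩))))) u1 u2 u3
            · -- no essentiality on NWreg: all equal-column points of the strip are tied
              have tie : ∀ (x₁ x₂ : X₁) (t : X₂), Ge1 R a₀ x₁ → Ge1 R a₀ x₂ → Ge2 R t p →
                  R (x₁,t) (x₂,t) := by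
                intro x₁ x₂ t h₁ h₂ ht
                by_contra hcon
                exact hEss ⟨x₂, x₁, t, memNWreg x₂ t h₂ ht, memNWreg x₁ t h₁ ht,
                  (tot _ _).resolve_left hcon, hcon⟩
              exact transSS w x y z p p RR S hw2 hx2 hy2 hz2' (ge2refl p) (ge2refl p) hRR hS
                (tie x w p hx1 hw1 (ge2refl p)) u2 (tie y z p hy1 hz1' (ge2refl p))
          have transSN : ∀ (w x y z : X₁) (P Q RR S : X₂),
              Ge1 R a₀ w → Ge1 R w b₀ → Ge1 R a₀ x → Ge1 R x b₀ →
              Ge1 R a₀ y → Ge1 R y b₀ → Ge1 R a₀ z → Ge1 R z b₀ →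
              Ge2 R p P → Ge2 R p Q → Ge2 R RR p → Ge2 R S p →
              R (x,Q) (w,P) → R (w,RR) (x,S) → R (y,P) (z,Q) → R (y,RR) (z,S) := by
            intro w x y z P Q RR S hw1 hw2 hx1 hx2 hy1 hy2 hz1' hz2' hP hQ hRR hS u1 u2 u3
            by_cases hEss : Ess1 R (SEreg R)
            · exact h4 w x y z P Q RR S
                (Or.inr (Or.inr (Or.inr (Or.inr (Or.inr
                  ⟨⟨memSEreg w P hw2 hP, memSEreg x Q hx2 hQ, memSEreg y P hy2 hP,
                    memSEreg z Q hz2' hQ⟩, hEss,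
                   ⟨memNWreg w RR hw1 hRR, memNWreg x S hx1 hS, memNWreg y RR hy1 hRR,
                    memNWreg z S hz1' hS⟩⟩))))) u1 u2 u3
            · have tie : ∀ (x₁ x₂ : X₁) (t : X₂), Ge1 R x₁ b₀ → Ge1 R x₂ b₀ → Ge2 R p t →
                  R (x₁,t) (x₂,t) := by
                intro x₁ x₂ t h₁ h₂ ht
                by_contra hcon
                exact hEss ⟨x₂, x₁, t, memSEreg x₂ t h₂ ht, memSEreg x₁ t h₁ ht,
                  (tot _ _).resolve_left hcon, hcon⟩
              exact transNN w x y z p p RR S hw1 hx1 hy1 hz1' (ge2refl p) (ge2refl p) hRR hS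
                (tie x w p hx2 hw2 (ge2refl p)) u2 (tie y z p hy2 hz2' (ge2refl p))
          -- classify the four columns relative to p
          rcases ge2tot p₁ p with hσp₁ | hσp₁ <;> rcases ge2tot q p with hσq | hσq <;>
            rcases ge2tot r p with hσr | hσr <;> rcases ge2tot s p with hσs | hσs
          -- 16 cases: first is N N N N, last is S S S S
          · exact transNN a b c d p₁ q r s haa hba hca hda hσp₁ hσq hσr hσs hP1 hP2 hP3
          · exact classNNNS h1 h2 h4 h8 hab ha hb haa hab' hba hbb' hca hcb' hda hdb'
              hσp₁ hσq hσr hσs hP1 hP2 hP3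
          · exact classNNSN h1 h2 h4 h8 hab ha hb haa hab' hba hbb' hca hcb' hda hdb'
              hσp₁ hσq hσr hσs hP1 hP2 hP3
          · exact transNS a b c d p₁ q r s haa hab' hba hbb' hca hcb' hda hdb'
              hσp₁ hσq hσr hσs hP1 hP2 hP3
          · exact classNSNN h1 h2 h4 h8 hab ha hb haa hab' hba hbb' hca hcb' hda hdb'
              hσp₁ hσq hσr hσs hP1 hP2 hP3
          · exact classNSmixed h1 h2 h4 h8 hab ha hb haa hab' hba hbb' hca hcb' hda hdb'
              hσp₁ hσq (Or.inl ⟨hσr, hσs⟩) hP1 hP2 hP3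
          · exact classNSmixed h1 h2 h4 h8 hab ha hb haa hab' hba hbb' hca hcb' hda hdb'
              hσp₁ hσq (Or.inr ⟨hσr, hσs⟩) hP1 hP2 hP3
          · exact classNSNN (R := flipR R) (a₀ := b₀) (b₀ := a₀) (p := p)
              (a1_flip h1) (a2_flip h2) (a4_flip h4) (a8_flip h8) hab
              (theta_flip hb) (theta_flip ha)
              (a := b) (b := a) (c := d) (d := c) (p₁ := q) (q := p₁) (r := s) (s := r)
              hbb' hba hab' haa hdb' hda hcb' hca
              hσq hσp₁ hσs hσr hP1 hP2 hP3
          · exact classSNNN h1 h2 h4 h8 hab ha hb haa hab' hba hbb' hca hcb' hda hdb'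
              hσp₁ hσq hσr hσs hP1 hP2 hP3
          · exact classSNmixed h1 h2 h4 h8 hab ha hb haa hab' hba hbb' hca hcb' hda hdb'
              hσp₁ hσq (Or.inl ⟨hσr, hσs⟩) hP1 hP2 hP3
          · exact classSNmixed h1 h2 h4 h8 hab ha hb haa hab' hba hbb' hca hcb' hda hdb'
              hσp₁ hσq (Or.inr ⟨hσr, hσs⟩) hP1 hP2 hP3
          · exact classSNNN (R := flipR R) (a₀ := b₀) (b₀ := a₀) (p := p)
              (a1_flip h1) (a2_flip h2) (a4_flip h4) (a8_flip h8) hab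
              (theta_flip hb) (theta_flip ha)
              (a := b) (b := a) (c := d) (d := c) (p₁ := q) (q := p₁) (r := s) (s := r)
              hbb' hba hab' haa hdb' hda hcb' hca
              hσq hσp₁ hσs hσr hP1 hP2 hP3
          · exact transSN a b c d p₁ q r s haa hab' hba hbb' hca hcb' hda hdb'
              hσp₁ hσq hσr hσs hP1 hP2 hP3
          · exact classNNNS (R := flipR R) (a₀ := b₀) (b₀ := a₀) (p := p)
              (a1_flip h1) (a2_flip h2) (a4_flip h4) (a8_flip h8) hab
              (theta_flip hb) (theta_flip ha)
              (a := b) (b := a) (c := d) (d := c) (p₁ := q) (q := p₁) (r := s) (s := r)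
              hbb' hba hab' haa hdb' hda hcb' hca
              hσq hσp₁ hσs hσr hP1 hP2 hP3
          · exact classNNSN (R := flipR R) (a₀ := b₀) (b₀ := a₀) (p := p)
              (a1_flip h1) (a2_flip h2) (a4_flip h4) (a8_flip h8) hab
              (theta_flip hb) (theta_flip ha)
              (a := b) (b := a) (c := d) (d := c) (p₁ := q) (q := p₁) (r := s) (s := r)
              hbb' hba hab' haa hdb' hda hcb' hca
              hσq hσp₁ hσs hσr hP1 hP2 hP3
          · exact transSS a b c d p₁ q r s hab' hbb' hcb' hdb' hσp₁ hσq hσr hσs hP1 hP2 hP3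
        · rcases hdeg4 with hMax1 | hMin2
          · exact rowdone (ge1trans _ _ _ hcb' (hMax1 a)) (ge1trans _ _ _ hbb' (hMax1 d))
          · -- Min2 p: every column is above p, use the NW slab
            have memNW : ∀ (x : X₁) (t : X₂), Ge1 R a₀ x → (x,t) ∈ NWz R z1 :=
              fun x t hx => ⟨ge2trans _ _ _ (hMin2 t) hz1mem.1, ge1trans _ _ _ hz1mem.2 hx⟩
            exact hTC1 a b c d p₁ q r s (memNW a p₁ haa) (memNW b q hba) (memNW a r haa)
              (memNW b s hba) (memNW c p₁ hca) (memNW d q hda) (memNW c r hca)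
              (memNW d s hda) hP1 hP2 hP3
      · rcases hdeg1 with hMin1 | hMax2
        · exact rowdone (ge1trans _ _ _ (hMin1 c) haa) (ge1trans _ _ _ (hMin1 b) hda)
        · rcases hbSE with ⟨z4, hz4m, hz4M, hTC4, hz4mem⟩ | ⟨hdeg4, _⟩
          · -- Max2 p: every column is below p, use the SE slab
            have memSE : ∀ (x : X₁) (t : X₂), Ge1 R x b₀ → (x,t) ∈ SEz R z4 :=
              fun x t hx => ⟨ge1trans _ _ _ hx hz4mem.1, ge2trans _ _ _ hz4mem.2 (hMax2 t)⟩
            exact hTC4 a b c d p₁ q r s (memSE a p₁ hab') (memSE b q hbb') (memSE a r hab')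
              (memSE b s hbb') (memSE c p₁ hcb') (memSE d q hdb') (memSE c r hcb')
              (memSE d s hdb') hP1 hP2 hP3
          · rcases hdeg4 with hMax1 | hMin2
            · exact rowdone (ge1trans _ _ _ hcb' (hMax1 a)) (ge1trans _ _ _ hbb' (hMax1 d))
            · -- Max2 p and Min2 p: all columns are equivalent
              have hrp₁ : Ge2 R r p₁ := ge2trans _ _ _ (hMin2 r) (hMax2 p₁)
              have hqs : Ge2 R q s := ge2trans _ _ _ (hMin2 q) (hMax2 s)
              exact htr _ _ _ (hrp₁ c) (htr _ _ _ hP3 (hqs d))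
  · exact hGood1 a b c d p₁ q r s ⟨hgp₁m, haa⟩ ⟨hgqm, hba⟩ ⟨hgrm, haa⟩
      ⟨hgsm, hba⟩ ⟨hgp₁m, hca⟩ ⟨hgqm, hda⟩ ⟨hgrm, hca⟩ ⟨hgsm, hda⟩ hP1 hP2 hP3
end

section
/- Suppose ≽ satisfies A1 (weak order), weak separability (A2), A3, bi-independence (A6), the structural assumption, and closedness. Suppose coordinate 1 is essential on NW, coordinate 2 is not essential on NW, coordinate 2 is essential on SE and coordinate 1 is not essential on SE (or the same with the two coordinates exchanged). Then either for every x ∈ SE there exists z ∈ Θ with z ∼ x, or for every y ∈ NW there exists z ∈ Θ with z ∼ y. -/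
open Set
open scoped Classical

/-- If each region has exactly one (opposite) essential coordinate, then every point of SE,
or every point of NW, is indifferent to a point of Θ. -/
theorem theta_equivalents_single_essential {X₁ X₂ : Type*} [Nonempty X₁] [Nonempty X₂]
    (R : X₁ × X₂ → X₁ × X₂ → Prop)
    (h1 : A1 R) (h2 : A2 R) (h3 : A3 R) (h6 : A6 R)
    (hstr : Structural R) (hclosed : Closedness R)
    (hess :
      (Ess1 R (NWreg R) ∧ ¬ Ess2 R (NWreg R) ∧ Ess2 R (SEreg R) ∧ ¬ Ess1 R (SEreg R)) ∨
      (Ess2 R (NWreg R) ∧ ¬ Ess1 R (NWreg R) ∧ Ess1 R (SEreg R) ∧ ¬ Ess2 R (SEreg R))) :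
    (∀ x ∈ SEreg R, ∃ z ∈ Theta R, IP R z x) ∨
    (∀ y ∈ NWreg R, ∃ z ∈ Theta R, IP R z y) := by
  classical
  obtain ⟨hcomp, -⟩ := h1
  have hrefl : ∀ x : X₁ × X₂, R x x := fun x => (hcomp x x).elim id id
  have hIP : ∀ x y : X₁ × X₂, ¬ SP R x y → ¬ SP R y x → IP R x y := by
    intro x y hxy hyx
    rcases hcomp x y with h | h
    · exact ⟨h, of_not_not fun hn => hxy ⟨h, hn⟩⟩
    · exact ⟨of_not_not fun hn => hyx ⟨h, hn⟩, h⟩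
  obtain ⟨hcl1, hcl2⟩ := hclosed
  rcases hess with ⟨-, hNW2, -, hSE1⟩ | ⟨-, hNW1, -, hSE2⟩
  · -- coord 2 inessential on NW, coord 1 inessential on SE
    by_cases hP : ∃ p : X₂, ∀ b : X₁, (b,p) ∈ SEreg R ∧ (b,p) ∉ NWreg R
    · right
      obtain ⟨p₀, hp₀⟩ := hP
      rintro ⟨a, p⟩ hy
      by_cases hyS : (a,p) ∈ SEreg R
      · exact ⟨(a,p), ⟨hyS, hy⟩, hrefl _, hrefl _⟩
      · obtain ⟨r, hr⟩ := hcl2 a p₀ p (hp₀ a).2 hyS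
        refine ⟨(a,r), hr, hIP _ _ ?_ ?_⟩
        · exact fun h => hNW2 ⟨r, p, a, hr.2, hy, h⟩
        · exact fun h => hNW2 ⟨p, r, a, hy, hr.2, h⟩
    · left
      push_neg at hP
      rintro ⟨a, p⟩ hx
      by_cases hxN : (a,p) ∈ NWreg R
      · exact ⟨(a,p), ⟨hx, hxN⟩, hrefl _, hrefl _⟩
      · obtain ⟨b, hb⟩ := hP p
        by_cases hbS : (b,p) ∈ SEreg R
        · refine ⟨(b,p), ⟨hbS, hb hbS⟩, hIP _ _ ?_ ?_⟩
          · exact fun h => hSE1 ⟨b, a, p, hbS, hx, h⟩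
          · exact fun h => hSE1 ⟨a, b, p, hx, hbS, h⟩
        · obtain ⟨c, hc⟩ := hcl1 a b p hxN hbS
          refine ⟨(c,p), hc, hIP _ _ ?_ ?_⟩
          · exact fun h => hSE1 ⟨c, a, p, hc.1, hx, h⟩
          · exact fun h => hSE1 ⟨a, c, p, hx, hc.1, h⟩
  · -- coord 1 inessential on NW, coord 2 inessential on SE
    by_cases hP : ∃ a : X₁, ∀ q : X₂, (a,q) ∈ SEreg R ∧ (a,q) ∉ NWreg R
    · right
      obtain ⟨a₀, ha₀⟩ := hP
      rintro ⟨b, p⟩ hy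
      by_cases hyS : (b,p) ∈ SEreg R
      · exact ⟨(b,p), ⟨hyS, hy⟩, hrefl _, hrefl _⟩
      · obtain ⟨c, hc⟩ := hcl1 a₀ b p (ha₀ p).2 hyS
        refine ⟨(c,p), hc, hIP _ _ ?_ ?_⟩
        · exact fun h => hNW1 ⟨c, b, p, hc.2, hy, h⟩
        · exact fun h => hNW1 ⟨b, c, p, hy, hc.2, h⟩
    · left
      push_neg at hP
      rintro ⟨a, p⟩ hx
      by_cases hxN : (a,p) ∈ NWreg R
      · exact ⟨(a,p), ⟨hx, hxN⟩, hrefl _, hrefl _⟩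
      · obtain ⟨q, hq⟩ := hP a
        by_cases hqS : (a,q) ∈ SEreg R
        · refine ⟨(a,q), ⟨hqS, hq hqS⟩, hIP _ _ ?_ ?_⟩
          · exact fun h => hSE2 ⟨q, p, a, hqS, hx, h⟩
          · exact fun h => hSE2 ⟨p, q, a, hx, hqS, h⟩
        · obtain ⟨r, hr⟩ := hcl2 a p q hxN hqS
          refine ⟨(a,r), hr, hIP _ _ ?_ ?_⟩
          · exact fun h => hSE2 ⟨r, p, a, hr.1, hx, h⟩
          · exact fun h => hSE2 ⟨p, r, a, hx, hr.1, h⟩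
end

section
/- Suppose ≽ satisfies A1 (weak order), weak separability (A2), A3, and closedness, and suppose V₁ : X₁ → ℝ and V₂ : X₂ → ℝ additively represent ≽ on SE(z) for every z ∈ Θ \ SE_ext. Then (V₁,V₂) additively represents ≽ on the whole set ⋃_{z ∈ Θ \ SE_ext} SE(z), i.e. for all x,y in this union: x ≽ y iff V₁(x₁) + V₂(x₂) ≥ V₁(y₁) + V₂(y₂). -/
open Set
open scoped Classical

/-- A pair of value functions representing `R` on each non-extreme SE cone represents `R`
globally on the union of these cones. -/
theorem additive_rep_global_on_SE {X₁ X₂ : Type*} [Nonempty X₁] [Nonempty X₂]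
    (R : X₁ × X₂ → X₁ × X₂ → Prop)
    (h1 : A1 R) (h2 : A2 R) (h3 : A3 R) (hclosed : Closedness R)
    (V₁ : X₁ → ℝ) (V₂ : X₂ → ℝ)
    (hrep : ∀ z ∈ Theta R \ SEext R, AddRep R V₁ V₂ (SEz R z)) :
    AddRep R V₁ V₂ (⋃ z ∈ Theta R \ SEext R, SEz R z) := by
  obtain ⟨com, htrans⟩ := h1
  have grefl1 : ∀ a : X₁, Ge1 R a a := fun a p => (com (a,p) (a,p)).elim id id
  have grefl2 : ∀ p : X₂, Ge2 R p p := fun p a => (com (a,p) (a,p)).elim id id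
  have ge1trans : ∀ a b c : X₁, Ge1 R a b → Ge1 R b c → Ge1 R a c :=
    fun a b c hab hbc p => htrans _ _ _ (hab p) (hbc p)
  have ge2trans : ∀ p q r : X₂, Ge2 R p q → Ge2 R q r → Ge2 R p r :=
    fun p q r hpq hqr a => htrans _ _ _ (hpq a) (hqr a)
  have ge1tot : ∀ a b : X₁, ¬ Ge1 R a b → Ge1 R b a := by
    intro a b h
    obtain ⟨p, hp⟩ := not_forall.mp h
    exact h2.1 b a p ⟨(com (b,p) (a,p)).resolve_right hp, hp⟩
  have ge2tot : ∀ p q : X₂, ¬ Ge2 R p q → Ge2 R q p := by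
    intro p q h
    obtain ⟨a, ha⟩ := not_forall.mp h
    exact h2.2 q p a ⟨(com (a,q) (a,p)).resolve_right ha, ha⟩
  have mono : ∀ a b : X₁, ∀ p q : X₂, Ge1 R a b → Ge2 R p q → R (a,p) (b,q) :=
    fun a b p q hab hpq => htrans _ _ _ (hab p) (hpq b)
  intro x hx y hy
  simp only [Set.mem_iUnion, exists_prop] at hx hy
  obtain ⟨z, hz, hx1, hx2⟩ := hx
  obtain ⟨w, hw, hy1, hy2⟩ := hy
  by_cases c1 : Ge1 R x.1 w.1 ∧ Ge2 R w.2 x.2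
  · exact hrep w hw x ⟨c1.1, c1.2⟩ y ⟨hy1, hy2⟩
  by_cases c2 : Ge1 R y.1 z.1 ∧ Ge2 R z.2 y.2
  · exact hrep z hz x ⟨hx1, hx2⟩ y ⟨c2.1, c2.2⟩
  rw [not_and_or] at c1 c2
  rcases c1 with c1 | c1 <;> rcases c2 with c2 | c2
  · -- impossible: Ge1 x.1 w.1 via x.1 ≽ z.1 ≽ y.1 ≽ w.1
    exact absurd (ge1trans _ _ _ hx1 (ge1trans _ _ _ (ge1tot _ _ c2) hy1)) c1
  · -- m = (w.1, z.2), with m ≽ x and y ≽ m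
    have hw1x : Ge1 R w.1 x.1 := ge1tot _ _ c1
    have hy2z : Ge2 R y.2 z.2 := ge2tot _ _ c2
    set m : X₁ × X₂ := (w.1, z.2) with hm
    have hmz : m ∈ SEz R z := ⟨ge1trans _ _ _ hw1x hx1, grefl2 z.2⟩
    have hmw : m ∈ SEz R w := ⟨grefl1 w.1, ge2trans _ _ _ hy2 hy2z⟩
    have hmx : R m x := mono w.1 x.1 z.2 x.2 hw1x hx2
    have hym : R y m := mono y.1 w.1 y.2 z.2 hy1 hy2z
    have hVxm : V₁ x.1 + V₂ x.2 ≤ V₁ m.1 + V₂ m.2 :=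
      (hrep z hz m hmz x ⟨hx1, hx2⟩).mp hmx
    have hVmy : V₁ m.1 + V₂ m.2 ≤ V₁ y.1 + V₂ y.2 :=
      (hrep w hw y ⟨hy1, hy2⟩ m hmw).mp hym
    constructor
    · intro hxy
      have hxm : R x m := htrans _ _ _ hxy hym
      have hmy : R m y := htrans _ _ _ hmx hxy
      exact le_trans ((hrep w hw m hmw y ⟨hy1, hy2⟩).mp hmy)
        ((hrep z hz x ⟨hx1, hx2⟩ m hmz).mp hxm)
    · intro hVyx
      have hxm : R x m :=
        (hrep z hz x ⟨hx1, hx2⟩ m hmz).mpr (le_trans hVmy hVyx)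
      have hmy : R m y :=
        (hrep w hw m hmw y ⟨hy1, hy2⟩).mpr (le_trans hVyx hVxm)
      exact htrans _ _ _ hxm hmy
  · -- m = (z.1, w.2), with x ≽ m and m ≽ y
    have hx2w : Ge2 R x.2 w.2 := ge2tot _ _ c1
    have hz1y : Ge1 R z.1 y.1 := ge1tot _ _ c2
    set m : X₁ × X₂ := (z.1, w.2) with hm
    have hmz : m ∈ SEz R z := ⟨grefl1 z.1, ge2trans _ _ _ hx2 hx2w⟩
    have hmw : m ∈ SEz R w := ⟨ge1trans _ _ _ hz1y hy1, grefl2 w.2⟩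
    have hxm : R x m := mono x.1 z.1 x.2 w.2 hx1 hx2w
    have hmy : R m y := mono z.1 y.1 w.2 y.2 hz1y hy2
    refine ⟨fun _ => ?_, fun _ => htrans _ _ _ hxm hmy⟩
    exact le_trans ((hrep w hw m hmw y ⟨hy1, hy2⟩).mp hmy)
      ((hrep z hz x ⟨hx1, hx2⟩ m hmz).mp hxm)
  · -- impossible: Ge2 z.2 y.2 via z.2 ≽ x.2 ≽ w.2 ≽ y.2
    exact absurd (ge2trans _ _ _ hx2 (ge2trans _ _ _ (ge2tot _ _ c1) hy2)) c2
end
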